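/- arXiv:1905.05878 — 5 statements merged into one kernel-verified Lean document; each statement's English description precedes it below -/
import Mathlib

section
/- Every compact subgroup G of GL(n,ℝ) is conjugate to a subgroup of the orthogonal group O(n): there exists g ∈ GL(n,ℝ) such that g⁻¹Gg ⊆ O(n). -/
open MeasureTheory Matrix
open scoped MatrixOrder

set_option maxHeartbeats 1000000 in

/-- Every compact subgroup G of GL(n,ℝ) is conjugate to a subgroup of the orthogonal
group O(n): there is g ∈ GL(n,ℝ) with g⁻¹ G g ⊆ O(n). -/
theorem compact_subgroup_conjugate_to_orthogonal
    {n : ℕ} (G : Subgroup (Matrix.GeneralLinearGroup (Fin n) ℝ))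
    (hG : IsCompact (G : Set (Matrix.GeneralLinearGroup (Fin n) ℝ))) :
    ∃ g : Matrix.GeneralLinearGroup (Fin n) ℝ, ∀ A ∈ G,
      ((g⁻¹ * A * g : Matrix.GeneralLinearGroup (Fin n) ℝ) : Matrix (Fin n) (Fin n) ℝ) ∈
        Matrix.orthogonalGroup (Fin n) ℝ := by
  classical
  letI : NormedAddCommGroup (Matrix (Fin n) (Fin n) ℝ) := Matrix.normedAddCommGroup
  letI : NormedSpace ℝ (Matrix (Fin n) (Fin n) ℝ) := Matrix.normedSpace
  haveI : CompactSpace ↥G := isCompact_iff_compactSpace.mp hG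
  haveI : T2Space ↥G := inferInstance
  haveI : LocallyCompactSpace ↥G := inferInstance
  borelize ↥G
  let μ : Measure ↥G := Measure.haar
  -- the matrix entries map
  let m : ↥G → Matrix (Fin n) (Fin n) ℝ := fun a =>
    ((a : Matrix.GeneralLinearGroup (Fin n) ℝ) : Matrix (Fin n) (Fin n) ℝ)
  have hm : Continuous m := Units.continuous_val.comp continuous_subtype_val
  have hmul : ∀ a b : ↥G, m (a * b) = m a * m b := fun a b => rfl
  have hminv : ∀ a : ↥G, IsUnit (m a) :=
    fun a => ((a : Matrix.GeneralLinearGroup (Fin n) ℝ)).isUnit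
  let F : ↥G → Matrix (Fin n) (Fin n) ℝ := fun a => m a * (m a)ᵀ
  have hF : Continuous F := hm.matrix_mul hm.matrix_transpose
  letI : ContinuousENorm (Matrix (Fin n) (Fin n) ℝ) := SeminormedAddGroup.toContinuousENorm
  have hFint : Integrable F μ :=
    hF.integrable_of_hasCompactSupport (HasCompactSupport.of_compactSpace F)
  -- the averaged matrix
  let B : Matrix (Fin n) (Fin n) ℝ := ∫ a, F a ∂μ
  -- invariance of B
  have key : ∀ γ : ↥G, m γ * B * (m γ)ᵀ = B := by
    intro γ
    let L : Matrix (Fin n) (Fin n) ℝ →ₗ[ℝ] Matrix (Fin n) (Fin n) ℝ :=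
      (LinearMap.mulRight ℝ (m γ)ᵀ).comp (LinearMap.mulLeft ℝ (m γ))
    have h1 : m γ * B * (m γ)ᵀ = ∫ a, m γ * F a * (m γ)ᵀ ∂μ := by
      have := (L.toContinuousLinearMap.integral_comp_comm hFint).symm
      exact this
    have h2 : ∀ a : ↥G, m γ * F a * (m γ)ᵀ = F (γ * a) := by
      intro a
      simp only [F, hmul, Matrix.transpose_mul, mul_assoc]
    rw [h1]
    simp_rw [h2]
    exact integral_mul_left_eq_self F γ
  -- B is symmetric
  have hBsym : Bᵀ = B := by
    let T : Matrix (Fin n) (Fin n) ℝ →ₗ[ℝ] Matrix (Fin n) (Fin n) ℝ :=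
      { toFun := Matrix.transpose
        map_add' := fun x y => Matrix.transpose_add x y
        map_smul' := fun c x => Matrix.transpose_smul c x }
    have hT := (T.toContinuousLinearMap.integral_comp_comm hFint).symm
    have h3 : ∀ a : ↥G, (F a)ᵀ = F a := by
      intro a
      simp [F, Matrix.transpose_mul, mul_assoc]
    calc Bᵀ = ∫ a, (F a)ᵀ ∂μ := by exact hT
    _ = B := by simp_rw [h3]; rfl
  -- B is positive definite
  have hBpos : B.PosDef := by
    refine Matrix.PosDef.of_dotProduct_mulVec_pos ?_ ?_
    · rw [Matrix.IsHermitian, Matrix.conjTranspose_eq_transpose_of_trivial, hBsym]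
    · intro x hx
      let φ : Matrix (Fin n) (Fin n) ℝ →ₗ[ℝ] ℝ :=
        { toFun := fun M => x ⬝ᵥ M.mulVec x
          map_add' := fun M N => by simp [Matrix.add_mulVec, dotProduct_add]
          map_smul' := fun c M => by simp [Matrix.smul_mulVec, dotProduct_smul] }
      have hφ : x ⬝ᵥ B.mulVec x = ∫ a, x ⬝ᵥ (F a).mulVec x ∂μ :=
        (φ.toContinuousLinearMap.integral_comp_comm hFint).symm
      have h4 : ∀ a : ↥G, x ⬝ᵥ (F a).mulVec x = ((m a)ᵀ.mulVec x) ⬝ᵥ ((m a)ᵀ.mulVec x) := by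
        intro a
        simp only [F, ← Matrix.mulVec_mulVec, Matrix.dotProduct_mulVec,
          Matrix.mulVec_transpose]
      have hnonneg : ∀ a : ↥G, 0 ≤ x ⬝ᵥ (F a).mulVec x := by
        intro a
        rw [h4 a]
        exact Finset.sum_nonneg fun i _ => mul_self_nonneg _
      have hone : x ⬝ᵥ (F (1 : ↥G)).mulVec x ≠ 0 := by
        have : x ⬝ᵥ (F (1 : ↥G)).mulVec x = x ⬝ᵥ x := by
          simp [F, m]
        rw [this]
        exact fun h => hx (dotProduct_self_eq_zero.mp h)
      have hq : Continuous fun a : ↥G => x ⬝ᵥ (F a).mulVec x :=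
        φ.toContinuousLinearMap.continuous.comp hF
      have := hq.integral_pos_of_hasCompactSupport_nonneg_nonzero
        (HasCompactSupport.of_compactSpace _) hnonneg hone (μ := μ)
      have hstar : star x = x := funext fun i => rfl
      rw [hstar]
      rw [hφ]
      exact this
  -- the square root of B
  let S : Matrix (Fin n) (Fin n) ℝ := CFC.sqrt B
  have hSsq : S * S = B := CFC.sqrt_mul_sqrt_self B hBpos.posSemidef.nonneg
  have hSsym : Sᵀ = S := by
    have := (CFC.sqrt_nonneg B).posSemidef.1
    rwa [Matrix.IsHermitian, Matrix.conjTranspose_eq_transpose_of_trivial] at this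
  have hSdet : IsUnit S.det := by
    have hBdet : (0 : ℝ) < B.det := hBpos.det_pos
    have : S.det * S.det = B.det := by rw [← Matrix.det_mul, hSsq]
    refine isUnit_iff_ne_zero.mpr fun h => ?_
    rw [h, mul_zero] at this
    exact hBdet.ne this
  have hSU : IsUnit S := (Matrix.isUnit_iff_isUnit_det S).mpr hSdet
  have hSinv_mul : S⁻¹ * S = 1 := Matrix.nonsing_inv_mul S hSdet
  have hS_mul_inv : S * S⁻¹ = 1 := Matrix.mul_nonsing_inv S hSdet
  -- the conjugating element
  refine ⟨hSU.unit, fun A hA => ?_⟩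
  have hg : ((hSU.unit : Matrix.GeneralLinearGroup (Fin n) ℝ) :
      Matrix (Fin n) (Fin n) ℝ) = S := hSU.unit_spec
  have hginv : ((hSU.unit⁻¹ : Matrix.GeneralLinearGroup (Fin n) ℝ) :
      Matrix (Fin n) (Fin n) ℝ) = S⁻¹ := by
    have h := Matrix.coe_units_inv hSU.unit
    rw [h, hg]
  rw [Matrix.mem_orthogonalGroup_iff]
  have hcoe : ((hSU.unit⁻¹ * A * hSU.unit : Matrix.GeneralLinearGroup (Fin n) ℝ) :
      Matrix (Fin n) (Fin n) ℝ) = S⁻¹ * m ⟨A, hA⟩ * S := by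
    simp [Units.val_mul, hginv, hg, m]
  rw [hcoe]
  have hstarM : star (S⁻¹ * m ⟨A, hA⟩ * S) = Sᵀ * (m ⟨A, hA⟩)ᵀ * (S⁻¹)ᵀ := by
    rw [Matrix.star_eq_conjTranspose, Matrix.conjTranspose_eq_transpose_of_trivial,
      Matrix.transpose_mul, Matrix.transpose_mul, mul_assoc]
  have hSinvT : (S⁻¹)ᵀ = S⁻¹ := by rw [Matrix.transpose_nonsing_inv, hSsym]
  rw [← Matrix.conjTranspose_eq_transpose_of_trivial, ← Matrix.star_eq_conjTranspose, hstarM, hSinvT, hSsym]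
  have hkey := key ⟨A, hA⟩
  calc S⁻¹ * m ⟨A, hA⟩ * S * (S * (m ⟨A, hA⟩)ᵀ * S⁻¹)
      = S⁻¹ * (m ⟨A, hA⟩ * (S * S) * (m ⟨A, hA⟩)ᵀ) * S⁻¹ := by
        simp only [mul_assoc]
    _ = S⁻¹ * B * S⁻¹ := by rw [hSsq, hkey]
    _ = 1 := by rw [← hSsq]; rw [show S⁻¹ * (S * S) * S⁻¹ = (S⁻¹ * S) * (S * S⁻¹) by
          simp only [mul_assoc], hSinv_mul, hS_mul_inv, one_mul]
end

section
/- Let K ⊆ ℝⁿ, n ≥ 3, be an affine symmetric body of revolution with axis of revolution L and hyperplane of revolution H, and let Γ be a linear subspace of dimension k with 1 < k < n that is not contained in H. Then K ∩ Γ is an affine symmetric body of revolution in Γ with hyperplane of revolution Γ ∩ H; moreover if L ⊆ Γ then L is an axis of revolution of K ∩ Γ. -/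
/-- A symmetric convex body: compact, convex, nonempty interior, invariant under `x ↦ -x`. -/
def IsSymmConvexBody {E : Type*} [NormedAddCommGroup E] [InnerProductSpace ℝ E]
    (K : Set E) : Prop :=
  IsCompact K ∧ Convex ℝ K ∧ (interior K).Nonempty ∧ ∀ x ∈ K, -x ∈ K

/-- An ellipsoid: an affine image of the closed unit Euclidean ball. -/
def IsEllipsoid {E : Type*} [NormedAddCommGroup E] [InnerProductSpace ℝ E]
    (K : Set E) : Prop :=
  ∃ (T : E ≃L[ℝ] E) (c : E), K = (fun x => c + T x) '' Metric.closedBall (0 : E) 1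

/-- A (honest) symmetric body of revolution with axis spanned by the unit vector `v`:
every section by an affine hyperplane orthogonal to the axis is a closed ball
centered on the axis (possibly empty). -/
def IsBodyOfRevolutionWith {E : Type*} [NormedAddCommGroup E] [InnerProductSpace ℝ E]
    (K : Set E) (v : E) : Prop :=
  ‖v‖ = 1 ∧ ∀ t : ℝ,
    K ∩ {x | (inner ℝ v x : ℝ) = t} = ∅ ∨
    ∃ r : ℝ, 0 ≤ r ∧
      K ∩ {x | (inner ℝ v x : ℝ) = t} =
        Metric.closedBall (t • v) r ∩ {x | (inner ℝ v x : ℝ) = t}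

/-- An affine symmetric body of revolution with axis of revolution `L` and associated
hyperplane of revolution `H`: some linear (continuous linear equivalence) image of `K`
is an honest body of revolution whose axis is the image of `L` and whose hyperplane of
revolution (the orthogonal complement of the axis) is the image of `H`. -/
def IsAffineBodyOfRevolution {E : Type*} [NormedAddCommGroup E] [InnerProductSpace ℝ E]
    (K : Set E) (L H : Submodule ℝ E) : Prop :=
  ∃ (T : E ≃L[ℝ] E) (v : E),
    IsBodyOfRevolutionWith (T '' K) v ∧
    L.map ((T : E →L[ℝ] E) : E →ₗ[ℝ] E) = Submodule.span ℝ {v} ∧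
    H.map ((T : E →L[ℝ] E) : E →ₗ[ℝ] E) = (Submodule.span ℝ {v})ᗮ

theorem IsBodyOfRevolutionWith.map_isometry
    {E F : Type*} [NormedAddCommGroup E] [InnerProductSpace ℝ E]
    [NormedAddCommGroup F] [InnerProductSpace ℝ F]
    (f : E ≃ₗᵢ[ℝ] F) {S : Set E} {w : E} (h : IsBodyOfRevolutionWith S w) :
    IsBodyOfRevolutionWith (f '' S) (f w) := by
  obtain ⟨hw, hsec⟩ := h
  refine ⟨by simp [hw], fun t => ?_⟩
  have hplane : {x : F | (inner ℝ (f w) x : ℝ) = t} = f '' {y : E | (inner ℝ w y : ℝ) = t} := by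
    ext x
    constructor
    · intro hx
      refine ⟨f.symm x, ?_, by simp⟩
      have h2 : (inner ℝ w (f.symm x) : ℝ) = inner ℝ (f w) x := by
        rw [← f.inner_map_map w (f.symm x), f.apply_symm_apply]
      simpa [Set.mem_setOf_eq, h2] using hx
    · rintro ⟨y, hy, rfl⟩
      simpa [f.inner_map_map] using hy
  rcases hsec t with h0 | ⟨r, hr, hball⟩
  · left
    rw [hplane, ← Set.image_inter f.injective, h0, Set.image_empty]
  · right
    refine ⟨r, hr, ?_⟩
    rw [hplane, ← Set.image_inter f.injective, hball, Set.image_inter f.injective,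
      f.image_closedBall, map_smul]

open Metric in
theorem isBOR_section
    {E : Type*} [NormedAddCommGroup E] [InnerProductSpace ℝ E]
    {B : Set E} {v : E} (hB : IsBodyOfRevolutionWith B v)
    (G : Submodule ℝ E) [G.HasOrthogonalProjection]
    (hne : ∃ y ∈ G, (inner ℝ v y : ℝ) ≠ 0) :
    IsBodyOfRevolutionWith (((↑) : G → E) ⁻¹' B)
      ((‖((G.orthogonalProjection v : G) : E)‖⁻¹ : ℝ) • (G.orthogonalProjection v : G)) := by
  obtain ⟨hv1, hsec⟩ := hB
  set P : G := G.orthogonalProjection v with hP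
  set p : E := (P : E) with hpdef
  have hinner : ∀ y : E, y ∈ G → (inner ℝ v y : ℝ) = inner ℝ p y := by
    intro y hy
    have h1 : v - p ∈ Gᗮ := G.sub_starProjection_mem_orthogonal v
    have h2 : (inner ℝ (v - p) y : ℝ) = 0 := (Submodule.mem_orthogonal' G (v - p)).mp h1 y hy
    rw [inner_sub_left] at h2
    linarith
  have hp0 : p ≠ 0 := by
    obtain ⟨y, hyG, hyv⟩ := hne
    intro h
    exact hyv (by rw [hinner y hyG, h, inner_zero_left])
  set np : ℝ := ‖p‖ with hnpdef
  have hnp : 0 < np := norm_pos_iff.mpr hp0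
  set w' : G := (np⁻¹ : ℝ) • P with hw'def
  have hw'coe : (w' : E) = np⁻¹ • p := rfl
  have hw1 : ‖w'‖ = 1 := by
    rw [Submodule.coe_norm, hw'coe, norm_smul, norm_inv, norm_norm, ← hnpdef,
      inv_mul_cancel₀ hnp.ne']
  refine ⟨hw1, fun tt => ?_⟩
  set t : ℝ := np * tt with htdef
  have hplane : ∀ z : G, ((inner ℝ w' z : ℝ) = tt ↔ (inner ℝ v (z : E) : ℝ) = t) := by
    intro z
    rw [Submodule.coe_inner, hw'coe, real_inner_smul_left, hinner (z : E) z.2,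
      inv_mul_eq_iff_eq_mul₀ hnp.ne']
  rcases hsec t with h0 | ⟨r, hr, hball⟩
  · left
    ext z
    simp only [Set.mem_inter_iff, Set.mem_preimage, Set.mem_setOf_eq,
      Set.mem_empty_iff_false, iff_false, not_and]
    intro hzB hzt
    have hzE : (z : E) ∈ B ∩ {x | (inner ℝ v x : ℝ) = t} := ⟨hzB, (hplane z).mp hzt⟩
    rw [h0] at hzE
    exact hzE
  · set q : E := ((np ^ 2)⁻¹ : ℝ) • p with hq
    set c : E := t • q with hc
    have hcG : c ∈ G := G.smul_mem _ (G.smul_mem _ (by rw [hpdef]; exact P.2))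
    have hvp : (inner ℝ v p : ℝ) = np ^ 2 := by
      rw [hinner p (by rw [hpdef]; exact P.2), real_inner_self_eq_norm_sq]
    have hvc : (inner ℝ v c : ℝ) = t := by
      rw [hc, real_inner_smul_right, hq, real_inner_smul_right, hvp,
        inv_mul_cancel₀ (by positivity), mul_one]
    set D : ℝ := ‖c - t • v‖ with hD
    have pyth : ∀ z : G, (inner ℝ v (z : E) : ℝ) = t →
        ‖(z : E) - t • v‖ ^ 2 = ‖(z : E) - c‖ ^ 2 + D ^ 2 := by
      intro z hz
      have hyG : (z : E) - c ∈ G := G.sub_mem z.2 hcG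
      have hvy : (inner ℝ v ((z : E) - c) : ℝ) = 0 := by
        rw [inner_sub_right, hz, hvc, sub_self]
      have hpy : (inner ℝ p ((z : E) - c) : ℝ) = 0 := by
        rw [← hinner _ hyG, hvy]
      have horth : (inner ℝ ((z : E) - c) (c - t • v) : ℝ) = 0 := by
        rw [real_inner_comm, hc, ← smul_sub, real_inner_smul_left, inner_sub_left,
          hq, real_inner_smul_left, hpy, hvy, mul_zero, zero_sub, neg_zero, mul_zero]
      have : (z : E) - t • v = ((z : E) - c) + (c - t • v) := by
        rw [sub_add_sub_cancel]
      rw [this, norm_add_sq_real, horth]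
      ring
    by_cases hrD : r < D
    · left
      ext z
      simp only [Set.mem_inter_iff, Set.mem_preimage, Set.mem_setOf_eq,
        Set.mem_empty_iff_false, iff_false, not_and]
      intro hzB hzt
      have ht := (hplane z).mp hzt
      have hzE : (z : E) ∈ closedBall (t • v) r ∩ {x | (inner ℝ v x : ℝ) = t} := by
        rw [← hball]; exact ⟨hzB, ht⟩
      have h1 : ‖(z : E) - t • v‖ ≤ r := by
        simpa [Metric.mem_closedBall, dist_eq_norm] using hzE.1
      have h1' : ‖(z : E) - t • v‖ ^ 2 ≤ r ^ 2 := pow_le_pow_left₀ (norm_nonneg _) h1 2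
      have h2 := pyth z ht
      nlinarith [norm_nonneg ((z : E) - c)]
    · push_neg at hrD
      set ρ : ℝ := Real.sqrt (r ^ 2 - D ^ 2) with hρ
      have hD0 : 0 ≤ D := norm_nonneg _
      have hsub : 0 ≤ r ^ 2 - D ^ 2 := by nlinarith
      have hρ0 : 0 ≤ ρ := Real.sqrt_nonneg _
      have hρsq : ρ ^ 2 = r ^ 2 - D ^ 2 := Real.sq_sqrt hsub
      have hcoe : ((tt • w' : G) : E) = c := by
        rw [Submodule.coe_smul, hw'coe, smul_smul, hc, hq, smul_smul, htdef]
        congr 1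
        field_simp
      have hdist : ∀ z : G, dist z (tt • w') = ‖(z : E) - c‖ := by
        intro z
        rw [dist_eq_norm, Submodule.coe_norm, Submodule.coe_sub, hcoe]
      right
      refine ⟨ρ, hρ0, ?_⟩
      ext z
      simp only [Set.mem_inter_iff, Set.mem_preimage, Set.mem_setOf_eq, Metric.mem_closedBall]
      constructor
      · rintro ⟨hzB, hzt⟩
        have ht := (hplane z).mp hzt
        refine ⟨?_, hzt⟩
        have hzE : (z : E) ∈ closedBall (t • v) r ∩ {x | (inner ℝ v x : ℝ) = t} := by
          rw [← hball]; exact ⟨hzB, ht⟩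
        have h1 : ‖(z : E) - t • v‖ ≤ r := by
          simpa [Metric.mem_closedBall, dist_eq_norm] using hzE.1
        have h1' : ‖(z : E) - t • v‖ ^ 2 ≤ r ^ 2 := pow_le_pow_left₀ (norm_nonneg _) h1 2
        have h2 : ‖(z : E) - c‖ ^ 2 ≤ ρ ^ 2 := by
          rw [hρsq]
          linarith [pyth z ht]
        have h3 := Real.sqrt_le_sqrt h2
        rw [Real.sqrt_sq (norm_nonneg _), Real.sqrt_sq hρ0] at h3
        rw [hdist z]
        exact h3
      · rintro ⟨hzd, hzt⟩
        have ht := (hplane z).mp hzt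
        rw [hdist z] at hzd
        have ha : ‖(z : E) - c‖ ^ 2 ≤ ρ ^ 2 := pow_le_pow_left₀ (norm_nonneg _) hzd 2
        have h2 : ‖(z : E) - t • v‖ ^ 2 ≤ r ^ 2 := by
          rw [hρsq] at ha
          linarith [pyth z ht]
        have h3 := Real.sqrt_le_sqrt h2
        rw [Real.sqrt_sq (norm_nonneg _), Real.sqrt_sq hr] at h3
        have hzE : (z : E) ∈ B ∩ {x | (inner ℝ v x : ℝ) = t} := by
          rw [hball]
          exact ⟨by simpa [Metric.mem_closedBall, dist_eq_norm] using h3, ht⟩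
        exact ⟨hzE.1, hzt⟩

/-- If K ⊆ ℝⁿ, n ≥ 3, is an affine symmetric body of revolution with axis L and
hyperplane of revolution H, and Γ is a k-dimensional linear subspace, 1 < k < n,
not contained in H, then K ∩ Γ is an affine symmetric body of revolution in Γ with
hyperplane of revolution Γ ∩ H; moreover if L ⊆ Γ then L is an axis of K ∩ Γ. -/
theorem section_of_affine_body_of_revolution
    {n k : ℕ} (hn : 3 ≤ n) (hk1 : 1 < k) (hkn : k < n)
    (K : Set (EuclideanSpace ℝ (Fin n))) (hK : IsSymmConvexBody K)
    (L H : Submodule ℝ (EuclideanSpace ℝ (Fin n)))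
    (hrev : IsAffineBodyOfRevolution K L H)
    (Γ : Submodule ℝ (EuclideanSpace ℝ (Fin n)))
    (hΓdim : Module.finrank ℝ Γ = k) (hΓH : ¬ Γ ≤ H) :
    (∃ L' : Submodule ℝ Γ,
        IsAffineBodyOfRevolution (((↑) : Γ → EuclideanSpace ℝ (Fin n)) ⁻¹' K) L'
          (H.comap Γ.subtype)) ∧
    (L ≤ Γ →
        IsAffineBodyOfRevolution (((↑) : Γ → EuclideanSpace ℝ (Fin n)) ⁻¹' K)
          (L.comap Γ.subtype) (H.comap Γ.subtype)) := by
  classical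
  obtain ⟨T, v, hB, hL, hH⟩ := hrev
  let Te : (EuclideanSpace ℝ (Fin n)) ≃ₗ[ℝ] (EuclideanSpace ℝ (Fin n)) := T.toLinearEquiv
  set G : Submodule ℝ (EuclideanSpace ℝ (Fin n)) := Submodule.map (Te : (EuclideanSpace ℝ (Fin n)) →ₗ[ℝ] (EuclideanSpace ℝ (Fin n))) Γ with hGdef
  have hmemG : ∀ x : (EuclideanSpace ℝ (Fin n)), x ∈ G ↔ ∃ y ∈ Γ, T y = x := by
    intro x
    simp only [hGdef, Submodule.mem_map]
    rfl
  have hHmem : ∀ x : (EuclideanSpace ℝ (Fin n)), T.symm x ∈ H ↔ (inner ℝ v x : ℝ) = 0 := by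
    intro x
    rw [← Submodule.mem_orthogonal_singleton_iff_inner_right, ← hH]
    constructor
    · intro hx
      exact Submodule.mem_map.mpr ⟨T.symm x, hx, by simp⟩
    · intro hx
      obtain ⟨y, hy, hyx⟩ := Submodule.mem_map.mp hx
      have : y = T.symm x := by
        apply T.injective
        change T y = x at hyx
        rw [hyx]; simp
      rwa [← this]
  have hLmem : ∀ x : (EuclideanSpace ℝ (Fin n)), T.symm x ∈ L ↔ x ∈ Submodule.span ℝ {v} := by
    intro x
    rw [← hL]
    constructor
    · intro hx
      exact Submodule.mem_map.mpr ⟨T.symm x, hx, by simp⟩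
    · intro hx
      obtain ⟨y, hy, hyx⟩ := Submodule.mem_map.mp hx
      have : y = T.symm x := by
        apply T.injective
        change T y = x at hyx
        rw [hyx]; simp
      rwa [← this]
  have hne : ∃ y ∈ G, (inner ℝ v y : ℝ) ≠ 0 := by
    by_contra hcon
    push_neg at hcon
    apply hΓH
    intro x hx
    have h1 : T x ∈ G := (hmemG (T x)).mpr ⟨x, hx, rfl⟩
    have h2 := hcon _ h1
    have h3 := (hHmem (T x)).mpr h2
    simpa using h3
  haveI : CompleteSpace G := FiniteDimensional.complete ℝ G
  set P : G := G.orthogonalProjection v with hPdef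
  set p : (EuclideanSpace ℝ (Fin n)) := (P : (EuclideanSpace ℝ (Fin n))) with hpdef
  set np : ℝ := ‖p‖ with hnpdef
  have hinner : ∀ y : (EuclideanSpace ℝ (Fin n)), y ∈ G → (inner ℝ v y : ℝ) = inner ℝ p y := by
    intro y hy
    have h1 : v - p ∈ Gᗮ := G.sub_starProjection_mem_orthogonal v
    have h2 : (inner ℝ (v - p) y : ℝ) = 0 := (Submodule.mem_orthogonal' G (v - p)).mp h1 y hy
    rw [inner_sub_left] at h2
    linear_combination h2
  have hp0 : p ≠ 0 := by
    obtain ⟨y, hyG, hyv⟩ := hne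
    intro h
    exact hyv (by rw [hinner y hyG, h, inner_zero_left])
  have hnp : 0 < np := norm_pos_iff.mpr hp0
  set w' : G := (np⁻¹ : ℝ) • P with hw'def
  have hw'coe : (w' : (EuclideanSpace ℝ (Fin n))) = np⁻¹ • p := rfl
  have hS : IsBodyOfRevolutionWith (((↑) : G → (EuclideanSpace ℝ (Fin n))) ⁻¹' (T '' K)) w' :=
    isBOR_section hB G hne
  have hrk : Module.finrank ℝ G = Module.finrank ℝ Γ := Te.finrank_map_eq Γ
  let ι : G ≃ₗᵢ[ℝ] Γ :=
    ((stdOrthonormalBasis ℝ G).repr.trans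
      (LinearIsometryEquiv.piLpCongrLeft 2 ℝ ℝ (finCongr hrk))).trans
      (stdOrthonormalBasis ℝ Γ).repr.symm
  let e1 : Γ ≃ₗ[ℝ] G := Te.submoduleMap Γ
  have he1 : ∀ y : Γ, ((e1 y : G) : (EuclideanSpace ℝ (Fin n))) = T y := fun y => rfl
  let T' : Γ ≃L[ℝ] Γ := (e1.trans ι.toLinearEquiv).toContinuousLinearEquiv
  have hT'app : ∀ y : Γ, T' y = ι (e1 y) := fun y => rfl
  have himg : ⇑T' '' (((↑) : Γ → (EuclideanSpace ℝ (Fin n))) ⁻¹' K) = ⇑ι '' (((↑) : G → (EuclideanSpace ℝ (Fin n))) ⁻¹' (T '' K)) := by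
    ext z
    simp only [Set.mem_image, Set.mem_preimage]
    constructor
    · rintro ⟨y, hy, rfl⟩
      exact ⟨e1 y, ⟨↑y, hy, (he1 y).symm⟩, (hT'app y).symm⟩
    · rintro ⟨x, hx, rfl⟩
      refine ⟨e1.symm x, ?_, ?_⟩
      · obtain ⟨u, hu, hux⟩ := hx
        have h1 : T ↑(e1.symm x) = ↑x := by rw [← he1 (e1.symm x), e1.apply_symm_apply]
        have h2 : (↑(e1.symm x) : (EuclideanSpace ℝ (Fin n))) = u := T.injective (by rw [h1, ← hux])
        rwa [h2]
      · rw [hT'app, e1.apply_symm_apply]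
  have hBOR : IsBodyOfRevolutionWith (⇑T' '' (((↑) : Γ → (EuclideanSpace ℝ (Fin n))) ⁻¹' K)) (ι w') := by
    rw [himg]; exact hS.map_isometry ι
  have hw'inner : ∀ z : Γ,
      (inner ℝ (ι w') z : ℝ) = (np⁻¹ : ℝ) * inner ℝ v ((ι.symm z : G) : (EuclideanSpace ℝ (Fin n))) := by
    intro z
    have h := ι.inner_map_map w' (ι.symm z)
    rw [ι.apply_symm_apply] at h
    rw [h, Submodule.coe_inner, hw'coe, real_inner_smul_left, ← hinner _ (ι.symm z).2]
  have hHmap : (H.comap Γ.subtype).map ((T' : Γ →L[ℝ] Γ) : Γ →ₗ[ℝ] Γ) = (Submodule.span ℝ {ι w'})ᗮ := by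
    ext z
    rw [Submodule.mem_orthogonal_singleton_iff_inner_right]
    constructor
    · intro hz
      obtain ⟨y, hy, hyz⟩ := Submodule.mem_map.mp hz
      simp only [Submodule.mem_comap, Submodule.subtype_apply] at hy
      have hyz' : T' y = z := hyz
      have hx : (ι.symm z : G) = e1 y := by rw [← hyz', hT'app, ι.symm_apply_apply]
      have hvy : T.symm ((ι.symm z : G) : (EuclideanSpace ℝ (Fin n))) ∈ H := by
        rw [hx, he1]
        simpa using hy
      have h0 := (hHmem _).mp hvy
      rw [hw'inner z, h0, mul_zero]
    · intro hz
      rw [hw'inner z] at hz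
      have h0 : (inner ℝ v ((ι.symm z : G) : (EuclideanSpace ℝ (Fin n))) : ℝ) = 0 := by
        rcases mul_eq_zero.mp hz with h | h
        · exact absurd h (inv_ne_zero hnp.ne')
        · exact h
      have hH2 : T.symm ((ι.symm z : G) : (EuclideanSpace ℝ (Fin n))) ∈ H := (hHmem _).mpr h0
      refine Submodule.mem_map.mpr ⟨e1.symm (ι.symm z), ?_, ?_⟩
      · simp only [Submodule.mem_comap, Submodule.subtype_apply]
        have hTy : T ↑(e1.symm (ι.symm z)) = ((ι.symm z : G) : (EuclideanSpace ℝ (Fin n))) := by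
          rw [← he1, e1.apply_symm_apply]
        have hcoe : (↑(e1.symm (ι.symm z)) : (EuclideanSpace ℝ (Fin n))) = T.symm ((ι.symm z : G) : (EuclideanSpace ℝ (Fin n))) := by
          rw [← hTy]; simp
        rw [hcoe]
        exact hH2
      · show T' _ = z
        rw [hT'app, e1.apply_symm_apply, ι.apply_symm_apply]
  have hT'surj : Function.Surjective ⇑(T' : Γ →L[ℝ] Γ) := T'.surjective
  constructor
  · exact ⟨(Submodule.span ℝ {ι w'}).comap ((T' : Γ →L[ℝ] Γ) : Γ →ₗ[ℝ] Γ), T', ι w', hBOR,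
      Submodule.map_comap_eq_of_surjective hT'surj _, hHmap⟩
  · intro hLΓ
    have hvG : v ∈ G := by
      have hvL : v ∈ L.map ((T : (EuclideanSpace ℝ (Fin n)) →L[ℝ] (EuclideanSpace ℝ (Fin n))) : (EuclideanSpace ℝ (Fin n)) →ₗ[ℝ] (EuclideanSpace ℝ (Fin n))) := by
        rw [hL]; exact Submodule.mem_span_singleton_self v
      obtain ⟨y, hy, hyv⟩ := Submodule.mem_map.mp hvL
      exact (hmemG v).mpr ⟨y, hLΓ hy, hyv⟩
    have hPv : P = ⟨v, hvG⟩ := G.orthogonalProjection_mem_subspace_eq_self ⟨v, hvG⟩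
    have hpv : p = v := by rw [hpdef, hPv]
    have hw'v : (w' : (EuclideanSpace ℝ (Fin n))) = v := by
      rw [hw'coe, hpv, hnpdef, hpv, hB.1, inv_one, one_smul]
    refine ⟨T', ι w', hBOR, ?_, hHmap⟩
    ext z
    rw [Submodule.mem_span_singleton]
    constructor
    · intro hz
      obtain ⟨y, hy, hyz⟩ := Submodule.mem_map.mp hz
      simp only [Submodule.mem_comap, Submodule.subtype_apply] at hy
      have hTy : T ↑y ∈ L.map ((T : (EuclideanSpace ℝ (Fin n)) →L[ℝ] (EuclideanSpace ℝ (Fin n))) : (EuclideanSpace ℝ (Fin n)) →ₗ[ℝ] (EuclideanSpace ℝ (Fin n))) := Submodule.mem_map.mpr ⟨↑y, hy, rfl⟩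
      rw [hL, Submodule.mem_span_singleton] at hTy
      obtain ⟨a, hav⟩ := hTy
      refine ⟨a, ?_⟩
      have hyz' : T' y = z := hyz
      rw [← hyz', hT'app, ← map_smul]
      congr 1
      apply Subtype.ext
      rw [Submodule.coe_smul, hw'v, he1, hav]
    · rintro ⟨a, haz⟩
      refine Submodule.mem_map.mpr ⟨e1.symm (ι.symm z), ?_, ?_⟩
      · simp only [Submodule.mem_comap, Submodule.subtype_apply]
        have hxcoe : ((ι.symm z : G) : (EuclideanSpace ℝ (Fin n))) = a • v := by
          rw [← haz, map_smul, ι.symm_apply_apply, Submodule.coe_smul, hw'v]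
        have hTy : T ↑(e1.symm (ι.symm z)) = ((ι.symm z : G) : (EuclideanSpace ℝ (Fin n))) := by
          rw [← he1, e1.apply_symm_apply]
        have hcoe : (↑(e1.symm (ι.symm z)) : (EuclideanSpace ℝ (Fin n))) = T.symm ((ι.symm z : G) : (EuclideanSpace ℝ (Fin n))) := by
          rw [← hTy]; simp
        rw [hcoe]
        exact (hLmem _).mpr (by rw [hxcoe]; exact Submodule.mem_span_singleton.mpr ⟨a, rfl⟩)
      · show T' _ = z
        rw [hT'app, e1.apply_symm_apply, ι.apply_symm_apply]
end

section
/- Let K ⊆ ℝⁿ, n ≥ 3, be an affine symmetric body of revolution with axis of revolution L. If there exists a linear subspace Γ ⊆ ℝⁿ of dimension ≥ 2 containing L such that K ∩ Γ is an ellipsoid, then K itself is an ellipsoid. -/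
open scoped RealInnerProductSpace

section aux
variable {E : Type*} [NormedAddCommGroup E] [InnerProductSpace ℝ E]

lemma sq_norm_le_one_iff {E : Type*} [NormedAddCommGroup E] (y : E) :
    ‖y‖^2 ≤ 1 ↔ ‖y‖ ≤ 1 := by
  constructor <;> intro h <;> nlinarith [norm_nonneg y]

lemma quad_expand {F : Type*} [NormedAddCommGroup F] [InnerProductSpace ℝ F]
    (u₁ u₂ : F) (t s : ℝ) :
    ‖t • u₁ + s • u₂‖^2 = ‖u₁‖^2*t^2 + 2*(inner ℝ u₁ u₂ : ℝ)*(t*s) + ‖u₂‖^2*s^2 := by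
  simp only [norm_add_sq_real, real_inner_smul_left, real_inner_smul_right, norm_smul,
    mul_pow, Real.norm_eq_abs, sq_abs]
  ring

lemma cross_term_zero {F : Type*} [NormedAddCommGroup F] [InnerProductSpace ℝ F]
    (u₁ u₂ : F) (hne : ∀ b : ℝ, u₂ ≠ b • u₁)
    (hsymm : ∀ t s : ℝ, ‖t • u₁ + s • u₂‖ ≤ 1 → ‖t • u₁ + (-s) • u₂‖ ≤ 1) :
    (inner ℝ u₁ u₂ : ℝ) = 0 := by
  obtain ⟨β, hβ⟩ : ∃ β : ℝ, β = (inner ℝ u₁ u₂ : ℝ) := ⟨_, rfl⟩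
  rw [← hβ]
  by_contra hβne
  have hne2 : β • u₁ - u₂ ≠ 0 := fun h => hne β (by rw [sub_eq_zero] at h; exact h.symm)
  obtain ⟨d, hd, hdpos⟩ : ∃ d : ℝ, d = ‖β • u₁ - u₂‖ ∧ 0 < d :=
    ⟨_, rfl, norm_pos_iff.2 hne2⟩
  have h1 : ‖(d⁻¹*β) • u₁ + (-d⁻¹) • u₂‖ = 1 := by
    have he : (d⁻¹*β) • u₁ + (-d⁻¹) • u₂ = d⁻¹ • (β • u₁ - u₂) := by
      match_scalars <;> ring
    rw [he, norm_smul, ← hd, Real.norm_eq_abs, abs_of_pos (inv_pos.2 hdpos)]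
    exact inv_mul_cancel₀ hdpos.ne'
  have h2' : ‖(d⁻¹*β) • u₁ + d⁻¹ • u₂‖ ≤ 1 := by
    have h2 := hsymm (d⁻¹*β) (-d⁻¹) (le_of_eq h1)
    simpa using h2
  have e1 : ‖u₁‖^2*(d⁻¹*β)^2 + 2*β*((d⁻¹*β)*(-d⁻¹)) + ‖u₂‖^2*(-d⁻¹)^2 = 1 := by
    rw [hβ, ← quad_expand, ← hβ, h1]; norm_num
  have e2 : ‖u₁‖^2*(d⁻¹*β)^2 + 2*β*((d⁻¹*β)*d⁻¹) + ‖u₂‖^2*(d⁻¹)^2 ≤ 1 := by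
    rw [hβ, ← quad_expand, ← hβ, sq_norm_le_one_iff]; exact h2'
  have hpos : 0 < β^2*(d⁻¹*d⁻¹) := by positivity
  nlinarith [e1, e2, hpos]

lemma translate_eq_self {A : Set E} (hA : IsCompact A) (hne : A.Nonempty)
    {t : E} (h : (fun x => t + x) '' A = A) : t = 0 := by
  have hcont : ContinuousOn (fun x : E => ⟪t, x⟫) A :=
    (continuous_const.inner continuous_id).continuousOn
  obtain ⟨m, hm, hmax⟩ := hA.exists_isMaxOn hne hcont
  have h1 : t + m ∈ A := h ▸ Set.mem_image_of_mem _ hm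
  have h2 : ⟪t, t + m⟫ ≤ ⟪t, m⟫ := hmax h1
  rw [inner_add_right, real_inner_self_eq_norm_sq] at h2
  have h3 : ‖t‖ = 0 := by nlinarith [norm_nonneg t]
  simpa using h3

lemma symm_ellipsoid_centered [FiniteDimensional ℝ E] {K : Set E}
    (hK : IsEllipsoid K) (hsym : ∀ x ∈ K, -x ∈ K) :
    ∃ T : E ≃L[ℝ] E, K = T '' Metric.closedBall 0 1 := by
  obtain ⟨T, c, rfl⟩ := hK
  set A : Set E := T '' Metric.closedBall 0 1 with hA
  clear_value A
  have himg : (fun x => c + T x) '' Metric.closedBall 0 1 = (fun y => c + y) '' A := by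
    rw [hA, Set.image_image]
  have hnegK : (fun y => c + y) '' A = (fun y => -c + y) '' A := by
    ext y
    simp only [hA, Set.image_image, Set.mem_image]
    constructor
    · rintro ⟨x, hx, rfl⟩
      obtain ⟨z, hz, hze⟩ := hsym _ (⟨x, hx, rfl⟩ :
        c + T x ∈ (fun x => c + T x) '' Metric.closedBall (0:E) 1)
      refine ⟨-z, by simpa using hz, ?_⟩
      have h3 : T z = -(c + T x) - c := by
        have h4 : c + T z = -(c + T x) := hze
        rw [← h4]; abel
      rw [map_neg, h3]; abel
    · rintro ⟨x, hx, rfl⟩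
      have h1 : c + T (-x) ∈ (fun x => c + T x) '' Metric.closedBall (0:E) 1 :=
        ⟨-x, by simpa using hx, rfl⟩
      obtain ⟨z, hz, hze⟩ := hsym _ h1
      refine ⟨z, hz, ?_⟩
      have h4 : c + T z = -(c + T (-x)) := hze
      rw [h4, map_neg]; abel
  have htrans : (fun y => (c + c) + y) '' A = A := by
    have h4 := congrArg (Set.image (fun y => c + y)) hnegK
    rw [Set.image_image, Set.image_image] at h4
    calc (fun y => (c+c) + y) '' A = (fun a => c + (c + a)) '' A := by simp only [add_assoc]
      _ = (fun a => c + (-c + a)) '' A := h4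
      _ = A := by simp
  have hAcomp : IsCompact A := hA ▸ (isCompact_closedBall (0:E) 1).image T.continuous
  have hAne : A.Nonempty := hA ▸ ⟨T 0, 0, by simp⟩
  have hc : c + c = 0 := translate_eq_self hAcomp hAne htrans
  have hc0 : c = 0 := by
    have h5 : (2:ℝ) • c = 0 := by rw [two_smul]; exact hc
    simpa using h5
  subst hc0
  exact ⟨T, by simp⟩



set_option maxHeartbeats 1000000

/-- If K ⊆ ℝⁿ, n ≥ 3, is an affine symmetric body of revolution with axis L, and some
linear subspace Γ of dimension ≥ 2 containing L meets K in an ellipsoid, then K is an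
ellipsoid. -/


theorem ellipsoidal_section_through_axis
    {n : ℕ} (hn : 3 ≤ n)
    (K : Set (EuclideanSpace ℝ (Fin n))) (hK : IsSymmConvexBody K)
    (L : Submodule ℝ (EuclideanSpace ℝ (Fin n)))
    (hrev : ∃ H, IsAffineBodyOfRevolution K L H)
    (Γ : Submodule ℝ (EuclideanSpace ℝ (Fin n)))
    (hΓdim : 2 ≤ Module.finrank ℝ Γ) (hLΓ : L ≤ Γ)
    (hell : IsEllipsoid (((↑) : Γ → EuclideanSpace ℝ (Fin n)) ⁻¹' K)) :
    IsEllipsoid K := by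
  classical
  obtain ⟨Hs, T, v, ⟨hv1, hsec⟩, hL, hH⟩ := hrev
  have hv0 : v ≠ 0 := fun h => by rw [h] at hv1; simp at hv1
  -- v comes from Γ
  have hvmem : v ∈ Γ.map ((T : EuclideanSpace ℝ (Fin n) →L[ℝ] EuclideanSpace ℝ (Fin n)) : EuclideanSpace ℝ (Fin n) →ₗ[ℝ] EuclideanSpace ℝ (Fin n)) := by
    have h1 : v ∈ Submodule.span ℝ {v} := Submodule.mem_span_singleton_self v
    rw [← hL] at h1
    exact Submodule.map_mono hLΓ h1
  obtain ⟨v', hv'Γ, hv'⟩ := hvmem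
  rw [ContinuousLinearMap.coe_coe, ContinuousLinearEquiv.coe_coe] at hv'
  have hv'0 : v' ≠ 0 := fun h => hv0 (by rw [← hv', h]; simp)
  -- a vector of Γ outside the axis
  have hnotle : ¬ (Γ ≤ Submodule.span ℝ {v'}) := by
    intro hle
    have h1 : Module.finrank ℝ Γ ≤ Module.finrank ℝ (Submodule.span ℝ {v'}) :=
      Submodule.finrank_mono hle
    rw [finrank_span_singleton hv'0] at h1
    omega
  obtain ⟨u', hu'Γ, hu'span⟩ := SetLike.not_le_iff_exists.1 hnotle
  clear hnotle
  -- Gram–Schmidt: unit vector w orthogonal to v, coming from Γ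
  set c₀ : ℝ := ⟪v, T u'⟫ with hc₀
  set w0 := T u' - c₀ • v with hw0def
  have hw0T : T (u' - c₀ • v') = w0 := by
    rw [map_sub, map_smul, hv', hw0def]
  have hw0perp : ⟪v, w0⟫ = 0 := by
    rw [hw0def, inner_sub_right, real_inner_smul_right, real_inner_self_eq_norm_sq, hv1, ← hc₀]
    ring
  have hw0ne : w0 ≠ 0 := by
    intro h
    apply hu'span
    have h1 : u' - c₀ • v' = 0 := T.injective (by rw [hw0T, h, map_zero])
    have h2 : u' = c₀ • v' := by rwa [sub_eq_zero] at h1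
    exact Submodule.mem_span_singleton.2 ⟨c₀, h2.symm⟩
  have hw0norm : ‖w0‖ ≠ 0 := norm_ne_zero_iff.2 hw0ne
  set w' := ‖w0‖⁻¹ • (u' - c₀ • v') with hw'def
  have hw'Γ : w' ∈ Γ := Submodule.smul_mem _ _
    (Submodule.sub_mem _ hu'Γ (Submodule.smul_mem _ _ hv'Γ))
  set w := T w' with hwdef
  have hwT : w = ‖w0‖⁻¹ • w0 := by rw [hwdef, hw'def, map_smul, hw0T]
  have hw1 : ‖w‖ = 1 := by
    rw [hwT, norm_smul, norm_inv, norm_norm]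
    field_simp
  have hvw : ⟪v, w⟫ = 0 := by rw [hwT, real_inner_smul_right, hw0perp, mul_zero]
  have hwne : w ≠ 0 := fun h => by rw [h] at hw1; simp at hw1
  have hw'0 : w' ≠ 0 := fun h => hwne (by rw [hwdef, h, map_zero])
  -- the ellipsoidal section, centered
  have hsymK' : ∀ x ∈ (((↑) : Γ → EuclideanSpace ℝ (Fin n)) ⁻¹' K), -x ∈ (((↑) : Γ → EuclideanSpace ℝ (Fin n)) ⁻¹' K) := by
    intro x hx
    simp only [Set.mem_preimage] at hx ⊢
    simpa using hK.2.2.2 _ hx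
  obtain ⟨Te, hKe⟩ := symm_ellipsoid_centered hell hsymK'
  set u₁ : Γ := Te.symm ⟨v', hv'Γ⟩ with hu₁
  set u₂ : Γ := Te.symm ⟨w', hw'Γ⟩ with hu₂
  -- the key correspondence
  have key : ∀ t s : ℝ, t • v + s • w ∈ T '' K ↔ ‖t • u₁ + s • u₂‖ ≤ 1 := by
    intro t s
    have hz : t • v + s • w = T (t • v' + s • w') := by
      rw [map_add, map_smul, map_smul, hv', hwdef]
    rw [hz, T.injective.mem_set_image]
    have hzΓ : t • v' + s • w' ∈ Γ :=
      Submodule.add_mem _ (Submodule.smul_mem _ _ hv'Γ) (Submodule.smul_mem _ _ hw'Γ)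
    have h1 : (t • v' + s • w' ∈ K) ↔ (⟨t • v' + s • w', hzΓ⟩ : Γ) ∈ (((↑) : Γ → EuclideanSpace ℝ (Fin n)) ⁻¹' K) :=
      Iff.rfl
    rw [h1, hKe]
    have h2 : (⟨t • v' + s • w', hzΓ⟩ : Γ) = Te (t • u₁ + s • u₂) := by
      rw [map_add, map_smul, map_smul, hu₁, hu₂, Te.apply_symm_apply, Te.apply_symm_apply]
      ext
      simp
    rw [h2, Te.injective.mem_set_image, Metric.mem_closedBall, dist_zero_right]
  -- inner products along the axis
  have hin : ∀ t s : ℝ, ⟪v, t • v + s • w⟫ = t := by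
    intro t s
    rw [inner_add_right, real_inner_smul_right, real_inner_smul_right,
      real_inner_self_eq_norm_sq, hv1, hvw]
    ring
  -- reflection symmetry from the revolution structure
  have hflip : ∀ t s : ℝ, (t • v + s • w ∈ T '' K) ↔ (t • v + (-s) • w ∈ T '' K) := by
    intro t s
    rcases hsec t with he | ⟨r, hr0, hre⟩
    · constructor <;> intro hmemB
      · have hx : t • v + s • w ∈ T '' K ∩ {x | (inner ℝ v x : ℝ) = t} := ⟨hmemB, hin t s⟩
        rw [he] at hx
        exact absurd hx (Set.notMem_empty _)
      · have hx : t • v + (-s) • w ∈ T '' K ∩ {x | (inner ℝ v x : ℝ) = t} := ⟨hmemB, hin t (-s)⟩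
        rw [he] at hx
        exact absurd hx (Set.notMem_empty _)
    · have hmem : ∀ s : ℝ, (t • v + s • w ∈ T '' K ↔ ‖s • w‖ ≤ r) := by
        intro s
        constructor
        · intro h
          have h2 : t • v + s • w ∈ T '' K ∩ {x | (inner ℝ v x : ℝ) = t} := ⟨h, hin t s⟩
          rw [hre] at h2
          have h3 := h2.1
          rw [Metric.mem_closedBall, dist_eq_norm] at h3
          simpa using h3
        · intro h
          have h2 : t • v + s • w ∈ T '' K ∩ {x | (inner ℝ v x : ℝ) = t} := by
            rw [hre]
            refine ⟨?_, hin t s⟩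
            rw [Metric.mem_closedBall, dist_eq_norm]
            simpa using h
          exact h2.1
      rw [hmem s, hmem (-s)]
      simp [norm_smul]
  -- quadratic form expansion
  set α : ℝ := ‖u₁‖^2 with hαdef
  set γ : ℝ := ‖u₂‖^2 with hγdef
  set β : ℝ := ⟪u₁, u₂⟫ with hβdef
  have hQ : ∀ t s : ℝ, ‖t • u₁ + s • u₂‖^2 = α*t^2 + 2*β*(t*s) + γ*s^2 := by
    intro t s
    simp only [norm_add_sq_real, real_inner_smul_left, real_inner_smul_right, norm_smul,
      mul_pow, Real.norm_eq_abs, sq_abs, hαdef, hγdef, hβdef]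
    rw [Submodule.coe_inner, Submodule.coe_inner, Submodule.coe_smul, Submodule.coe_smul,
      real_inner_smul_left, real_inner_smul_right]
    ring
  have key2 : ∀ t s : ℝ, t • v + s • w ∈ T '' K ↔ α*t^2 + 2*β*(t*s) + γ*s^2 ≤ 1 := by
    intro t s
    rw [key t s, ← sq_norm_le_one_iff, hQ t s]
  -- the cross term vanishes
  have hβ0 : β = 0 := by
    rw [hβdef]
    apply cross_term_zero
    · intro b hb
      have h3 : (⟨w', hw'Γ⟩ : Γ) = b • (⟨v', hv'Γ⟩ : Γ) := by
        have h3' := congrArg Te hb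
        rw [hu₂, hu₁, Te.apply_symm_apply, map_smul, Te.apply_symm_apply] at h3'
        exact h3'
      have h4 : w' = b • v' := by
        have h4' := congrArg Subtype.val h3
        simpa using h4'
      have h5 : w = b • v := by rw [hwdef, h4, map_smul, hv']
      have h6 : b = 0 := by
        have h7 := hvw
        rw [h5, real_inner_smul_right, real_inner_self_eq_norm_sq, hv1] at h7
        simpa using h7
      rw [h6] at h5
      simp at h5
      exact hwne h5
    · intro t s hle
      exact (key t (-s)).1 ((hflip t s).1 ((key t s).2 hle))
  have hαpos : 0 < α := by
    rw [hαdef]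
    have : u₁ ≠ 0 := by
      intro h
      have h2 : (⟨v', hv'Γ⟩ : Γ) = 0 := by
        have := congrArg Te h
        rw [hu₁, Te.apply_symm_apply, map_zero] at this
        exact this
      exact hv'0 (congrArg Subtype.val h2)
    exact pow_pos (norm_pos_iff.2 this) 2
  have hγpos : 0 < γ := by
    rw [hγdef]
    have : u₂ ≠ 0 := by
      intro h
      have h2 : (⟨w', hw'Γ⟩ : Γ) = 0 := by
        have := congrArg Te h
        rw [hu₂, Te.apply_symm_apply, map_zero] at this
        exact this
      exact hw'0 (congrArg Subtype.val h2)
    exact pow_pos (norm_pos_iff.2 this) 2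
  have key3 : ∀ t s : ℝ, t • v + s • w ∈ T '' K ↔ α*t^2 + γ*s^2 ≤ 1 := by
    intro t s
    rw [key2 t s, hβ0]
    ring_nf
  -- global description of the rotated body
  have hmem : ∀ x, x ∈ T '' K ↔ α*(⟪v, x⟫)^2 + γ*‖x - (⟪v, x⟫) • v‖^2 ≤ 1 := by
    intro x
    rcases hsec (⟪v, x⟫) with he | ⟨r, hr0, hre⟩
    · constructor
      · intro h
        have hx : x ∈ T '' K ∩ {y | (inner ℝ v y : ℝ) = ⟪v, x⟫} := ⟨h, rfl⟩
        rw [he] at hx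
        exact absurd hx (Set.notMem_empty _)
      · intro h
        have h1 : α*(⟪v, x⟫)^2 + γ*(0:ℝ)^2 ≤ 1 := by
          have h9 : 0 ≤ γ*‖x - (⟪v, x⟫) • v‖^2 := mul_nonneg hγpos.le (sq_nonneg _)
          linarith
        have h2 : (⟪v, x⟫) • v + (0:ℝ) • w ∈ T '' K := (key3 _ 0).2 h1
        have h3 : (⟪v, x⟫) • v ∈ T '' K := by simpa using h2
        have h4 : (⟪v, x⟫) • v ∈ T '' K ∩ {y | (inner ℝ v y : ℝ) = ⟪v, x⟫} := by
          refine ⟨h3, ?_⟩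
          show (inner ℝ v ((⟪v, x⟫) • v) : ℝ) = ⟪v, x⟫
          rw [real_inner_smul_right, real_inner_self_eq_norm_sq, hv1]
          ring
        rw [he] at h4
        exact absurd h4 (Set.notMem_empty _)
    · have hxsec : x ∈ T '' K ↔ ‖x - (⟪v, x⟫) • v‖ ≤ r := by
        constructor
        · intro h
          have h2 : x ∈ T '' K ∩ {y | (inner ℝ v y : ℝ) = ⟪v, x⟫} := ⟨h, rfl⟩
          rw [hre] at h2
          have h3 := h2.1
          rwa [Metric.mem_closedBall, dist_eq_norm] at h3
        · intro h
          have h2 : x ∈ T '' K ∩ {y | (inner ℝ v y : ℝ) = ⟪v, x⟫} := by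
            rw [hre]
            exact ⟨by rwa [Metric.mem_closedBall, dist_eq_norm], rfl⟩
          exact h2.1
      have hsr : ∀ s : ℝ, 0 ≤ s → (s ≤ r ↔ α*(⟪v, x⟫)^2 + γ*s^2 ≤ 1) := by
        intro s hs
        have e1 : (⟪v, x⟫) • v + s • w ∈ T '' K ↔ ‖s • w‖ ≤ r := by
          constructor
          · intro h
            have h2 : (⟪v, x⟫) • v + s • w ∈ T '' K ∩ {y | (inner ℝ v y : ℝ) = ⟪v, x⟫} :=
              ⟨h, hin _ s⟩
            rw [hre] at h2
            have h3 := h2.1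
            rw [Metric.mem_closedBall, dist_eq_norm] at h3
            simpa using h3
          · intro h
            have h2 : (⟪v, x⟫) • v + s • w ∈ T '' K ∩ {y | (inner ℝ v y : ℝ) = ⟪v, x⟫} := by
              rw [hre]
              refine ⟨?_, hin _ s⟩
              rw [Metric.mem_closedBall, dist_eq_norm]
              simpa using h
            exact h2.1
        have e2 : ‖s • w‖ = s := by
          rw [norm_smul, hw1, Real.norm_eq_abs, abs_of_nonneg hs, mul_one]
        rw [e2] at e1
        exact e1.symm.trans (key3 _ s)
      rw [hxsec, hsr _ (norm_nonneg _)]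
  -- build the linear equivalence realizing T '' K as an ellipsoid
  obtain ⟨a, ha, hapos⟩ : ∃ a : ℝ, a^2 = α ∧ 0 < a :=
    ⟨Real.sqrt α, Real.sq_sqrt hαpos.le, Real.sqrt_pos.2 hαpos⟩
  obtain ⟨b, hb, hbpos⟩ : ∃ b : ℝ, b^2 = γ ∧ 0 < b :=
    ⟨Real.sqrt γ, Real.sq_sqrt hγpos.le, Real.sqrt_pos.2 hγpos⟩
  set P : EuclideanSpace ℝ (Fin n) →L[ℝ] EuclideanSpace ℝ (Fin n) :=
    (innerSL ℝ v).smulRight v with hP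
  set M : EuclideanSpace ℝ (Fin n) →L[ℝ] EuclideanSpace ℝ (Fin n) :=
    b • ContinuousLinearMap.id ℝ (EuclideanSpace ℝ (Fin n)) + (a - b) • P with hM
  set N : EuclideanSpace ℝ (Fin n) →L[ℝ] EuclideanSpace ℝ (Fin n) :=
    b⁻¹ • ContinuousLinearMap.id ℝ (EuclideanSpace ℝ (Fin n)) + (a⁻¹ - b⁻¹) • P with hN
  have hMapp : ∀ x, M x = b • x + ((a-b) * ⟪v, x⟫) • v := by
    intro x
    rw [hM, hP]
    simp [ContinuousLinearMap.smulRight_apply, mul_smul]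
  have hNapp : ∀ x, N x = b⁻¹ • x + ((a⁻¹-b⁻¹) * ⟪v, x⟫) • v := by
    intro x
    rw [hN, hP]
    simp [ContinuousLinearMap.smulRight_apply, mul_smul]
  have hinP : ∀ (c₁ c₂ : ℝ) (x : EuclideanSpace ℝ (Fin n)),
      ⟪v, c₁ • x + c₂ • v⟫ = c₁ * ⟪v, x⟫ + c₂ := by
    intro c₁ c₂ x
    rw [inner_add_right, real_inner_smul_right, real_inner_smul_right,
      real_inner_self_eq_norm_sq, hv1]
    ring
  have hNM : ∀ x, N (M x) = x := by
    intro x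
    rw [hMapp x, hNapp _, hinP]
    match_scalars
    · field_simp
    · field_simp
      ring
  have hMN : ∀ x, M (N x) = x := by
    intro x
    rw [hNapp x, hMapp _, hinP]
    match_scalars
    · field_simp
    · field_simp
      ring
  set Meq : EuclideanSpace ℝ (Fin n) ≃L[ℝ] EuclideanSpace ℝ (Fin n) :=
    (LinearEquiv.ofLinear M.toLinearMap N.toLinearMap
      (LinearMap.ext fun x => hMN x) (LinearMap.ext fun x => hNM x)).toContinuousLinearEquiv with hMeqdef
  have hMeq : ∀ x, Meq x = M x := fun _ => rfl
  have hMnorm : ∀ x, ‖M x‖^2 = α*(⟪v, x⟫)^2 + γ*‖x - (⟪v, x⟫) • v‖^2 := by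
    intro x
    have hM2 : M x = (a*⟪v, x⟫) • v + b • (x - (⟪v, x⟫) • v) := by
      rw [hMapp]
      match_scalars <;> ring
    have hperp : ⟪(a*⟪v, x⟫) • v, b • (x - (⟪v, x⟫) • v)⟫ = 0 := by
      rw [real_inner_smul_left, real_inner_smul_right, inner_sub_right,
        real_inner_smul_right, real_inner_self_eq_norm_sq, hv1]
      ring
    rw [hM2, norm_add_sq_real, hperp, norm_smul, norm_smul, hv1, mul_pow, mul_pow,
      Real.norm_eq_abs, Real.norm_eq_abs, sq_abs, sq_abs]
    linear_combination (⟪v, x⟫^2 * (1:ℝ)^2) * ha + (‖x - (⟪v, x⟫) • v‖^2) * hb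
  have hball : T '' K = Meq.symm '' Metric.closedBall 0 1 := by
    ext x
    rw [hmem x]
    constructor
    · intro h
      refine ⟨Meq x, ?_, Meq.symm_apply_apply x⟩
      rw [Metric.mem_closedBall, dist_zero_right, hMeq, ← sq_norm_le_one_iff, hMnorm]
      exact h
    · rintro ⟨y, hy, rfl⟩
      rw [Metric.mem_closedBall, dist_zero_right] at hy
      have h2 : ‖M (Meq.symm y)‖ ≤ 1 := by
        rw [← hMeq, Meq.apply_symm_apply]
        exact hy
      rw [← sq_norm_le_one_iff, hMnorm] at h2
      exact h2
  refine ⟨Meq.symm.trans T.symm, 0, ?_⟩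
  have h0 : K = T.symm '' (T '' K) := by
    rw [Set.image_image]
    simp
  rw [h0, hball, Set.image_image]
  apply Set.image_congr
  intro x _
  simp [ContinuousLinearEquiv.trans_apply]
end aux
end

section
/- Let B ⊆ ℝ^{n+1} be a symmetric convex body with n ≥ 4, and let Γ₁, Γ₂ be two distinct linear hyperplanes such that K_i = Γ_i ∩ B are affine symmetric bodies of revolution with axes L_i and associated hyperplanes of revolution H_i (i = 1,2). If L₁ ⊆ H₂, then K₁ is an ellipsoid. -/
open scoped RealInnerProductSpace

set_option maxHeartbeats 6000000

section Aux

variable {E : Type*} [NormedAddCommGroup E] [InnerProductSpace ℝ E]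

lemma rev_slice {K : Set E} {v : E} (hrev : IsBodyOfRevolutionWith K v) {x y : E}
    (hx : x ∈ K) (hy : (inner ℝ v y : ℝ) = inner ℝ v x)
    (hd : ‖y - (inner ℝ v x : ℝ) • v‖ ≤ ‖x - (inner ℝ v x : ℝ) • v‖) : y ∈ K := by
  obtain ⟨-, hK⟩ := hrev
  set t : ℝ := inner ℝ v x with ht
  rcases hK t with h | ⟨r, hr0, hr⟩
  · exact absurd h (Set.nonempty_iff_ne_empty.1 ⟨x, hx, rfl⟩)
  · have hxball : x ∈ Metric.closedBall (t • v) r ∩ {z | (inner ℝ v z : ℝ) = t} := by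
      rw [← hr]; exact ⟨hx, rfl⟩
    have hxd : ‖x - t • v‖ ≤ r := by
      simpa [Metric.mem_closedBall, dist_eq_norm] using hxball.1
    have : y ∈ Metric.closedBall (t • v) r ∩ {z | (inner ℝ v z : ℝ) = t} := by
      refine ⟨?_, hy⟩
      simp only [Metric.mem_closedBall, dist_eq_norm]
      exact le_trans hd hxd
    rw [← hr] at this
    exact this.1

noncomputable def smap (v : E) (a b : ℝ) : E →ₗ[ℝ] E where
  toFun x := b • x + ((a - b) * (inner ℝ v x : ℝ)) • v
  map_add' x y := by
    simp only [inner_add_right, smul_add]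
    rw [mul_add, add_smul]
    abel
  map_smul' c x := by
    simp only [inner_smul_right, RingHom.id_apply, smul_smul, smul_add]
    ring_nf

lemma smap_apply (v : E) (a b : ℝ) (x : E) :
    smap v a b x = b • x + ((a - b) * (inner ℝ v x : ℝ)) • v := rfl

lemma smap_comp {v : E} (hv : ‖v‖ = 1) {a b : ℝ} (ha : a ≠ 0) (hb : b ≠ 0) (x : E) :
    smap v a⁻¹ b⁻¹ (smap v a b x) = x := by
  have hvv : (inner ℝ v v : ℝ) = 1 := by
    rw [real_inner_self_eq_norm_sq, hv]; norm_num
  simp only [smap_apply, inner_add_right, inner_smul_right, hvv, mul_one, smul_smul, smul_add]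
  have h1 : b⁻¹ * b = 1 := inv_mul_cancel₀ hb
  have h2 : b⁻¹ * ((a - b) * (inner ℝ v x : ℝ)) +
      (a⁻¹ - b⁻¹) * (b * (inner ℝ v x : ℝ) + (a - b) * (inner ℝ v x : ℝ)) = 0 := by
    field_simp
    ring
  rw [h1, one_smul, add_assoc, ← add_smul, h2, zero_smul, add_zero]

noncomputable def sequiv [FiniteDimensional ℝ E] {v : E} (hv : ‖v‖ = 1) {a b : ℝ}
    (ha : a ≠ 0) (hb : b ≠ 0) : E ≃L[ℝ] E :=
  (LinearEquiv.ofLinear (smap v a b) (smap v a⁻¹ b⁻¹)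
    (by ext x; simpa [inv_inv] using smap_comp hv (inv_ne_zero ha) (inv_ne_zero hb) x)
    (by ext x; simpa using smap_comp hv ha hb x)).toContinuousLinearEquiv

lemma sequiv_apply [FiniteDimensional ℝ E] {v : E} (hv : ‖v‖ = 1) {a b : ℝ}
    (ha : a ≠ 0) (hb : b ≠ 0) (x : E) : sequiv hv ha hb x = smap v a b x := rfl

lemma smap_key {v : E} (hvv : (inner ℝ v v : ℝ) = 1) {a b : ℝ} (ha : a ≠ 0) (hb : b ≠ 0)
    (c : ℝ) (w : E) (hw : (inner ℝ v w : ℝ) = 0) :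
    smap v a b ((c / a) • v + b⁻¹ • w) = c • v + w := by
  simp only [smap_apply, inner_add_right, inner_smul_right, hvv, hw, mul_one, mul_zero,
    add_zero, smul_add, smul_smul]
  rw [mul_inv_cancel₀ hb, one_smul, add_right_comm, ← add_smul]
  have hc : b * (c / a) + (a - b) * (c / a) = c := by field_simp; ring
  rw [hc]

lemma ellipsoid_of_rev [FiniteDimensional ℝ E]
    {K : Set E} {v u : E} (hrev : IsBodyOfRevolutionWith K v)
    (hu : ‖u‖ = 1) (hvu : (inner ℝ v u : ℝ) = 0)
    {A G r : ℝ} (hA : 0 < A) (hG : 0 < G) (hr : 0 < r)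
    (hmem : ∀ t s : ℝ, (t • v + s • u ∈ K) ↔ A * t ^ 2 + G * s ^ 2 ≤ r ^ 2) :
    ∃ S : E ≃L[ℝ] E, K = S '' Metric.closedBall 0 1 := by
  have hv : ‖v‖ = 1 := hrev.1
  have hvv : (inner ℝ v v : ℝ) = 1 := by
    rw [real_inner_self_eq_norm_sq, hv]; norm_num
  set a : ℝ := r / Real.sqrt A with hadef
  set b : ℝ := r / Real.sqrt G with hbdef
  have hsA : Real.sqrt A > 0 := Real.sqrt_pos.2 hA
  have hsG : Real.sqrt G > 0 := Real.sqrt_pos.2 hG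
  have ha : 0 < a := div_pos hr hsA
  have hb : 0 < b := div_pos hr hsG
  have ha2 : A * a ^ 2 = r ^ 2 := by
    rw [hadef, div_pow, Real.sq_sqrt hA.le]
    field_simp
  have hb2 : G * b ^ 2 = r ^ 2 := by
    rw [hbdef, div_pow, Real.sq_sqrt hG.le]
    field_simp
  refine ⟨sequiv hv ha.ne' hb.ne', ?_⟩
  ext x
  constructor
  · intro hx
    set t : ℝ := inner ℝ v x with htdef
    set w : E := x - t • v with hwdef
    have hxw : x = t • v + w := by rw [hwdef]; abel
    have hw : (inner ℝ v w : ℝ) = 0 := by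
      rw [hwdef, inner_sub_right, inner_smul_right, hvv]; ring
    have hz : t • v + ‖w‖ • u ∈ K := by
      refine rev_slice hrev hx ?_ ?_
      · rw [inner_add_right, inner_smul_right, inner_smul_right, hvv, hvu, ← htdef]; ring
      · rw [← htdef, add_sub_cancel_left, norm_smul, hu, ← hwdef]
        simp
    have hAG : A * t ^ 2 + G * ‖w‖ ^ 2 ≤ r ^ 2 := (hmem t ‖w‖).1 hz
    refine ⟨(t / a) • v + b⁻¹ • w, ?_, by
      rw [sequiv_apply, smap_key hvv ha.ne' hb.ne' t w hw, ← hxw]⟩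
    have hnorm : ‖(t / a) • v + b⁻¹ • w‖ ^ 2 = (t / a) ^ 2 + (b⁻¹ * ‖w‖) ^ 2 := by
      rw [norm_add_sq_real, real_inner_smul_left, real_inner_smul_right, hw, norm_smul,
        norm_smul, hv, mul_one, Real.norm_eq_abs, Real.norm_eq_abs, mul_pow, sq_abs, sq_abs]
      ring
    have h1 : ((t / a) ^ 2 + (b⁻¹ * ‖w‖) ^ 2) ≤ 1 := by
      have e1 : (t / a) ^ 2 = A * t ^ 2 / r ^ 2 := by
        rw [div_pow, ← ha2]; field_simp
      have e2 : (b⁻¹ * ‖w‖) ^ 2 = G * ‖w‖ ^ 2 / r ^ 2 := by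
        rw [mul_pow, inv_pow, ← hb2]; field_simp
      rw [e1, e2, ← add_div, div_le_one (by positivity)]
      exact hAG
    rw [Metric.mem_closedBall, dist_zero_right]
    nlinarith [norm_nonneg ((t / a) • v + b⁻¹ • w), hnorm]
  · rintro ⟨y, hy, rfl⟩
    rw [Metric.mem_closedBall, dist_zero_right] at hy
    set t : ℝ := inner ℝ v y with htdef
    set w : E := y - t • v with hwdef
    have hyw : y = t • v + w := by rw [hwdef]; abel
    have hw : (inner ℝ v w : ℝ) = 0 := by
      rw [hwdef, inner_sub_right, inner_smul_right, hvv]; ring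
    have hSy : sequiv hv ha.ne' hb.ne' y = (a * t) • v + b • w := by
      rw [sequiv_apply]
      have : y = (a * t / a) • v + b⁻¹ • (b • w) := by
        rw [mul_div_cancel_left₀ _ ha.ne', smul_smul, inv_mul_cancel₀ hb.ne',
          one_smul, ← hyw]
      rw [this, smap_key hvv ha.ne' hb.ne' (a * t) (b • w)
        (by rw [inner_smul_right, hw]; ring)]
    have hy2 : t ^ 2 + ‖w‖ ^ 2 ≤ 1 := by
      have : ‖y‖ ^ 2 = t ^ 2 + ‖w‖ ^ 2 := by
        conv_lhs => rw [hyw]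
        rw [norm_add_sq_real, real_inner_smul_left, hw, norm_smul, hv, mul_one,
          Real.norm_eq_abs, sq_abs]
        ring
      nlinarith [norm_nonneg y]
    have hz : (a * t) • v + (b * ‖w‖) • u ∈ K := by
      rw [hmem]
      have : A * (a * t) ^ 2 + G * (b * ‖w‖) ^ 2 = r ^ 2 * (t ^ 2 + ‖w‖ ^ 2) := by
        linear_combination t ^ 2 * ha2 + ‖w‖ ^ 2 * hb2
      rw [this]
      nlinarith [hy2, sq_nonneg r]
    rw [hSy]
    refine rev_slice hrev hz ?_ ?_
    · simp only [inner_add_right, inner_smul_right, hvv, hvu, hw]; ring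
    · have hc : (inner ℝ v ((a * t) • v + (b * ‖w‖) • u) : ℝ) = a * t := by
        simp only [inner_add_right, inner_smul_right, hvv, hvu]; ring
      rw [hc, add_sub_cancel_left, add_sub_cancel_left, norm_smul, norm_smul, hu]
      simp [abs_of_pos hb, abs_mul, abs_of_nonneg (norm_nonneg w), mul_comm]

lemma diag_eq {d₁ d₂ r : ℝ} (h1 : 0 ≤ d₁) (h2 : 0 ≤ d₂) (hr : 0 < r)
    (h : ∀ t : ℝ, d₁ * t ^ 2 ≤ r ^ 2 ↔ d₂ * t ^ 2 ≤ r ^ 2) : d₁ = d₂ := by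
  by_contra hne
  wlog hlt : d₁ < d₂ generalizing d₁ d₂
  · exact this h2 h1 (fun t => (h t).symm) (Ne.symm hne)
      (lt_of_le_of_ne (not_lt.1 hlt) (Ne.symm hne))
  · have hd2 : 0 < d₂ := lt_of_le_of_lt h1 hlt
    set d' : ℝ := (d₁ + d₂) / 2 with hd'def
    have hd' : 0 < d' := by positivity
    set t : ℝ := r / Real.sqrt d' with htdef
    have ht2 : t ^ 2 = r ^ 2 / d' := by
      rw [htdef, div_pow, Real.sq_sqrt hd'.le]
    have hle : d₁ * t ^ 2 ≤ r ^ 2 := by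
      rw [ht2, ← mul_div_assoc, div_le_iff₀ hd']
      nlinarith
    have := (h t).1 hle
    rw [ht2, ← mul_div_assoc, div_le_iff₀ hd', hd'def] at this
    nlinarith [mul_pos hr hr]

end Aux


lemma sm_inner_smul_right {m : ℕ} {Γ : Submodule ℝ (EuclideanSpace ℝ (Fin m))} (x y : Γ)
    (c : ℝ) : (inner ℝ x (c • y) : ℝ) = c * inner ℝ x y := inner_smul_right (𝕜 := ℝ) x y c

lemma sm_inner_smul_left {m : ℕ} {Γ : Submodule ℝ (EuclideanSpace ℝ (Fin m))} (x y : Γ)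
    (c : ℝ) : (inner ℝ (c • x) y : ℝ) = c * inner ℝ x y := real_inner_smul_left x y c

/-- Let B ⊆ ℝ^{n+1}, n ≥ 4, be a symmetric convex body, Γ₁ ≠ Γ₂ two linear hyperplanes
whose sections K_i = Γ_i ∩ B are affine symmetric bodies of revolution with axes L_i and
hyperplanes of revolution H_i. If L₁ ⊆ H₂ then K₁ is an ellipsoid. -/
theorem section_with_axis_in_other_hyperplane_of_revolution
    {n : ℕ} (hn : 4 ≤ n)
    (B : Set (EuclideanSpace ℝ (Fin (n + 1)))) (hB : IsSymmConvexBody B)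
    (Γ₁ Γ₂ : Submodule ℝ (EuclideanSpace ℝ (Fin (n + 1))))
    (hΓ₁ : Module.finrank ℝ Γ₁ = n) (hΓ₂ : Module.finrank ℝ Γ₂ = n)
    (hΓne : Γ₁ ≠ Γ₂)
    (L₁ H₁ : Submodule ℝ Γ₁) (L₂ H₂ : Submodule ℝ Γ₂)
    (h₁ : IsAffineBodyOfRevolution
      (((↑) : Γ₁ → EuclideanSpace ℝ (Fin (n + 1))) ⁻¹' B) L₁ H₁)
    (h₂ : IsAffineBodyOfRevolution
      (((↑) : Γ₂ → EuclideanSpace ℝ (Fin (n + 1))) ⁻¹' B) L₂ H₂)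
    (hLH : L₁.map Γ₁.subtype ≤ H₂.map Γ₂.subtype) :
    IsEllipsoid (((↑) : Γ₁ → EuclideanSpace ℝ (Fin (n + 1))) ⁻¹' B) := by
  classical
  obtain ⟨hBc, hBconv, hBint, hBsymm⟩ := hB
  obtain ⟨T₁, v₁, hrev₁, hL₁, hH₁⟩ := h₁
  obtain ⟨T₂, v₂, hrev₂, hL₂, hH₂⟩ := h₂
  have hv₁ : ‖v₁‖ = 1 := hrev₁.1
  have hv₂ : ‖v₂‖ = 1 := hrev₂.1
  have hv₁ne : v₁ ≠ 0 := by intro h; rw [h, norm_zero] at hv₁; norm_num at hv₁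
  have hv₂ne : v₂ ≠ 0 := by intro h; rw [h, norm_zero] at hv₂; norm_num at hv₂
  set K₁ : Set Γ₁ := ((↑) : Γ₁ → EuclideanSpace ℝ (Fin (n + 1))) ⁻¹' B with hK₁def
  set K₂ : Set Γ₂ := ((↑) : Γ₂ → EuclideanSpace ℝ (Fin (n + 1))) ⁻¹' B with hK₂def
  -- `0` is an interior point of `B`
  obtain ⟨x₀, hx₀⟩ := hBint
  have hBeq : -B = B := by
    ext x
    simp only [Set.mem_neg]
    exact ⟨fun h => by simpa using hBsymm _ h, fun h => hBsymm _ h⟩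
  have hnegx₀ : -x₀ ∈ interior B := by
    have hopen : IsOpen (-interior B) := isOpen_interior.neg
    have hsub : -interior B ⊆ B := by
      intro x hx
      have h1 : -x ∈ interior B := Set.mem_neg.1 hx
      have h2 : -x ∈ B := interior_subset h1
      simpa using hBsymm _ h2
    exact interior_maximal hsub hopen (by simpa using hx₀)
  have h0int : (0 : EuclideanSpace ℝ (Fin (n + 1))) ∈ interior B := by
    have := hBconv.interior hx₀ hnegx₀ (le_of_lt one_half_pos) (le_of_lt one_half_pos)
      (by norm_num)
    simpa using this
  have h0B : (0 : EuclideanSpace ℝ (Fin (n + 1))) ∈ B := interior_subset h0int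
  obtain ⟨δ, hδ, hδB⟩ : ∃ δ > 0, Metric.ball (0 : EuclideanSpace ℝ (Fin (n + 1))) δ ⊆ B := by
    rcases Metric.isOpen_iff.1 isOpen_interior 0 h0int with ⟨δ, hδ, h⟩
    exact ⟨δ, hδ, h.trans interior_subset⟩
  -- the central section of `K₂` is a round ball of radius `r`
  obtain ⟨r, hr0, hslice⟩ : ∃ r : ℝ, 0 ≤ r ∧
      T₂ '' K₂ ∩ {x | (inner ℝ v₂ x : ℝ) = 0} =
        Metric.closedBall (0 : Γ₂) r ∩ {x | (inner ℝ v₂ x : ℝ) = 0} := by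
    rcases hrev₂.2 0 with hemp | ⟨r, hr0, hr⟩
    · exfalso
      have h0 : (0 : Γ₂) ∈ T₂ '' K₂ ∩ {x | (inner ℝ v₂ x : ℝ) = 0} := by
        refine ⟨⟨0, ?_, map_zero _⟩, by simp⟩
        simpa [hK₂def] using h0B
      rw [hemp] at h0
      exact h0
    · refine ⟨r, hr0, ?_⟩
      rw [hr, zero_smul]
  -- Fact F: membership of hyperplane-of-revolution points of `K₂` is detected by norm
  have factF : ∀ q : Γ₂, q ∈ H₂ → (((q : EuclideanSpace ℝ (Fin (n + 1))) ∈ B) ↔ ‖T₂ q‖ ≤ r) := by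
    intro q hq
    have hTq : T₂ q ∈ (Submodule.span ℝ {v₂})ᗮ := by
      rw [← hH₂]
      exact ⟨q, hq, by simp⟩
    have hinner : (inner ℝ v₂ (T₂ q) : ℝ) = 0 :=
      (Submodule.mem_orthogonal _ _).1 hTq v₂ (Submodule.mem_span_singleton_self v₂)
    constructor
    · intro hqB
      have : T₂ q ∈ T₂ '' K₂ ∩ {x | (inner ℝ v₂ x : ℝ) = 0} :=
        ⟨⟨q, hqB, rfl⟩, hinner⟩
      rw [hslice] at this
      simpa [Metric.mem_closedBall, dist_zero_right] using this.1
    · intro hnorm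
      have : T₂ q ∈ Metric.closedBall (0 : Γ₂) r ∩ {x | (inner ℝ v₂ x : ℝ) = 0} :=
        ⟨by simpa [Metric.mem_closedBall, dist_zero_right] using hnorm, hinner⟩
      rw [← hslice] at this
      obtain ⟨⟨q', hq', heq⟩, -⟩ := this
      have : q' = q := T₂.injective heq
      rw [← this]
      exact hq'
  -- dimension counting: find a suitable vector alongside the axis
  have hrL₁ : Module.finrank ℝ L₁ = 1 := by
    have hmapeq : Submodule.map (T₁.toLinearEquiv : Γ₁ →ₗ[ℝ] Γ₁) L₁ =
        Submodule.span ℝ {v₁} := hL₁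
    have h := (LinearEquiv.finrank_map_eq T₁.toLinearEquiv L₁).symm
    rw [hmapeq, finrank_span_singleton hv₁ne] at h
    exact h
  have hrH₂ : Module.finrank ℝ H₂ = n - 1 := by
    have hmapeq : Submodule.map (T₂.toLinearEquiv : Γ₂ →ₗ[ℝ] Γ₂) H₂ =
        (Submodule.span ℝ {v₂})ᗮ := hH₂
    have h1 := LinearEquiv.finrank_map_eq T₂.toLinearEquiv H₂
    rw [hmapeq] at h1
    have h2 := Submodule.finrank_add_finrank_orthogonal (K := Submodule.span ℝ {v₂})
    rw [finrank_span_singleton hv₂ne, hΓ₂] at h2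
    omega
  set W : Submodule ℝ (EuclideanSpace ℝ (Fin (n + 1))) := L₁.map Γ₁.subtype with hWdef
  set H₂' : Submodule ℝ (EuclideanSpace ℝ (Fin (n + 1))) := H₂.map Γ₂.subtype with hH₂'def
  have hrW : Module.finrank ℝ W = 1 := by
    rw [hWdef, Submodule.finrank_map_subtype_eq]; exact hrL₁
  have hrH₂' : Module.finrank ℝ H₂' = n - 1 := by
    rw [hH₂'def, Submodule.finrank_map_subtype_eq]; exact hrH₂
  have hsupinf := Submodule.finrank_sup_add_finrank_inf_eq H₂' Γ₁
  have hsuple : Module.finrank ℝ ↥(H₂' ⊔ Γ₁) ≤ n + 1 := by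
    have h := Submodule.finrank_le (H₂' ⊔ Γ₁)
    rwa [finrank_euclideanSpace_fin] at h
  have hinf2 : 2 ≤ Module.finrank ℝ ↥(H₂' ⊓ Γ₁) := by omega
  have hnotle : ¬ (H₂' ⊓ Γ₁ ≤ W) := by
    intro hle
    have := Submodule.finrank_mono hle
    omega
  obtain ⟨x, hxM, hxW⟩ := SetLike.not_le_iff_exists.1 hnotle
  clear hnotle
  have hxΓ₁ : x ∈ Γ₁ := (Submodule.mem_inf.1 hxM).2
  have hxH₂' : x ∈ H₂' := (Submodule.mem_inf.1 hxM).1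
  set y' : Γ₁ := ⟨x, hxΓ₁⟩ with hy'def
  have hy'L : y' ∉ L₁ := fun h => hxW ⟨y', h, rfl⟩
  -- construct the unit vector `u` orthogonal to `v₁`
  have hvv₁ : (inner ℝ v₁ v₁ : ℝ) = 1 := by
    rw [real_inner_self_eq_norm_sq, hv₁]; norm_num
  set z : Γ₁ := T₁ y' with hzdef
  set z' : Γ₁ := z - (inner ℝ v₁ z : ℝ) • v₁ with hz'def
  have hz'v : (inner ℝ v₁ z' : ℝ) = 0 := by
    rw [hz'def, inner_sub_right, sm_inner_smul_right, hvv₁]; ring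
  have hz'ne : z' ≠ 0 := by
    intro h
    apply hy'L
    have hzspan : z ∈ Submodule.span ℝ {v₁} := by
      rw [Submodule.mem_span_singleton]
      exact ⟨(inner ℝ v₁ z : ℝ), (sub_eq_zero.1 (hz'def ▸ h)).symm⟩
    rw [← hL₁] at hzspan
    obtain ⟨w, hwL, hw⟩ := hzspan
    have hwy : w = y' := by
      apply T₁.injective
      rw [hzdef] at hw
      simpa using hw
    rwa [← hwy]
  set u : Γ₁ := ‖z'‖⁻¹ • z' with hudef
  have hz'norm : ‖z'‖ ≠ 0 := norm_ne_zero_iff.2 hz'ne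
  have hu : ‖u‖ = 1 := by
    rw [hudef, norm_smul, norm_inv, norm_norm, inv_mul_cancel₀ hz'norm]
  have huv : (inner ℝ v₁ u : ℝ) = 0 := by
    rw [hudef, sm_inner_smul_right, hz'v, mul_zero]
  -- the plane spanned by `v₁, u` maps into `H₂'`
  set M : Submodule ℝ Γ₁ := H₂'.comap Γ₁.subtype with hMdef
  have hMv : T₁.symm v₁ ∈ M := by
    have hvspan : v₁ ∈ Submodule.span ℝ {v₁} := Submodule.mem_span_singleton_self v₁
    rw [← hL₁] at hvspan
    obtain ⟨w, hwL, hw⟩ := hvspan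
    have hws : T₁.symm v₁ = w := by
      apply T₁.injective
      simpa using hw.symm
    rw [hws]
    exact hLH ⟨w, hwL, rfl⟩
  have hMy : y' ∈ M := hxH₂'
  have hMu : T₁.symm u ∈ M := by
    have heq : T₁.symm u = ‖z'‖⁻¹ • (y' - (inner ℝ v₁ z : ℝ) • T₁.symm v₁) := by
      rw [hudef, map_smul, hz'def, map_sub, map_smul, hzdef, T₁.symm_apply_apply]
    rw [heq]
    exact M.smul_mem _ (M.sub_mem hMy (M.smul_mem _ hMv))
  have hMall : ∀ t s : ℝ, T₁.symm (t • v₁ + s • u) ∈ M := by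
    intro t s
    rw [map_add, map_smul, map_smul]
    exact M.add_mem (M.smul_mem _ hMv) (M.smul_mem _ hMu)
  -- the membership characterization on the plane spanned by `v₁, u`
  set g₁ : Γ₂ := T₂ (Γ₂.orthogonalProjectionOnto
    ((T₁.symm v₁ : Γ₁) : EuclideanSpace ℝ (Fin (n + 1)))) with hg₁def
  set g₂ : Γ₂ := T₂ (Γ₂.orthogonalProjectionOnto
    ((T₁.symm u : Γ₁) : EuclideanSpace ℝ (Fin (n + 1)))) with hg₂def
  have key : ∀ t s : ℝ, (t • v₁ + s • u ∈ T₁ '' K₁) ↔ ‖t • g₁ + s • g₂‖ ≤ r := by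
    intro t s
    set p : Γ₁ := T₁.symm (t • v₁ + s • u) with hpdef
    have himg : (t • v₁ + s • u ∈ T₁ '' K₁) ↔ p ∈ K₁ := by
      constructor
      · rintro ⟨y, hy, hyeq⟩
        have hpy : p = y := by rw [hpdef, ← hyeq, T₁.symm_apply_apply]
        rwa [hpy]
      · intro h
        exact ⟨p, h, by rw [hpdef, T₁.apply_symm_apply]⟩
    obtain ⟨q, hqH, hq⟩ := Submodule.mem_map.1 (Submodule.mem_comap.1 (hMall t s))
    have hq' : (q : EuclideanSpace ℝ (Fin (n + 1))) = (p : EuclideanSpace ℝ (Fin (n + 1))) := hq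
    have hproj : Γ₂.orthogonalProjectionOnto ((p : Γ₁) : EuclideanSpace ℝ (Fin (n + 1))) = q := by
      rw [← hq']
      exact Submodule.orthogonalProjectionOnto_mem_subspace_eq_self q
    have hcoe : ((p : Γ₁) : EuclideanSpace ℝ (Fin (n + 1))) =
        t • ((T₁.symm v₁ : Γ₁) : EuclideanSpace ℝ (Fin (n + 1))) +
        s • ((T₁.symm u : Γ₁) : EuclideanSpace ℝ (Fin (n + 1))) := by
      rw [hpdef, map_add, map_smul, map_smul]
      push_cast
      ring_nf
    have hlin : t • g₁ + s • g₂ = T₂ q := by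
      rw [← hproj, hcoe, map_add, map_smul, map_smul, map_add, map_smul, map_smul,
        hg₁def, hg₂def]
    rw [himg, hlin]
    have hpB : p ∈ K₁ ↔ ((p : Γ₁) : EuclideanSpace ℝ (Fin (n + 1))) ∈ B := Iff.rfl
    rw [hpB, ← hq']
    exact factF q hqH
  -- the quadratic form of the planar section
  set A : ℝ := ‖g₁‖ ^ 2 with hAdef
  set C : ℝ := (inner ℝ g₁ g₂ : ℝ) with hCdef
  set G : ℝ := ‖g₂‖ ^ 2 with hGdef
  have hexp : ∀ t s : ℝ, ‖t • g₁ + s • g₂‖ ^ 2 = A * t ^ 2 + 2 * C * (t * s) + G * s ^ 2 := by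
    intro t s
    rw [norm_add_sq_real, sm_inner_smul_left, sm_inner_smul_right, norm_smul, norm_smul,
      Real.norm_eq_abs, Real.norm_eq_abs, mul_pow, mul_pow, sq_abs, sq_abs, hAdef, hCdef, hGdef]
    ring
  have key2 : ∀ t s : ℝ, (t • v₁ + s • u ∈ T₁ '' K₁) ↔
      A * t ^ 2 + 2 * C * (t * s) + G * s ^ 2 ≤ r ^ 2 := by
    intro t s
    rw [key t s, ← hexp t s]
    constructor
    · intro h; nlinarith [norm_nonneg (t • g₁ + s • g₂)]
    · intro h; nlinarith [norm_nonneg (t • g₁ + s • g₂), hr0]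
  -- reflection symmetry of the planar section
  have hsym : ∀ t s : ℝ, t • v₁ + s • u ∈ T₁ '' K₁ → t • v₁ + (-s) • u ∈ T₁ '' K₁ := by
    intro t s h
    have hc : (inner ℝ v₁ (t • v₁ + s • u) : ℝ) = t := by
      simp only [inner_add_right, sm_inner_smul_right, hvv₁, huv]; ring
    refine rev_slice hrev₁ h ?_ ?_
    · rw [hc]
      simp only [inner_add_right, sm_inner_smul_right, hvv₁, huv, mul_one, mul_zero, add_zero]
    · rw [hc, add_sub_cancel_left, add_sub_cancel_left, neg_smul, norm_neg]
  have hmemsym : ∀ t s : ℝ, (A * t ^ 2 + 2 * C * (t * s) + G * s ^ 2 ≤ r ^ 2) ↔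
      (A * t ^ 2 + 2 * C * (t * (-s)) + G * (-s) ^ 2 ≤ r ^ 2) := by
    intro t s
    rw [← key2, ← key2]
    refine ⟨hsym t s, fun h => ?_⟩
    have h2 := hsym t (-s) h
    rwa [neg_neg] at h2
  -- a bound on the body
  obtain ⟨R₀, hR₀⟩ := hBc.isBounded.exists_norm_le
  set R : ℝ := ‖(T₁ : Γ₁ →L[ℝ] Γ₁)‖ * R₀ with hRdef
  have hR : ∀ w ∈ T₁ '' K₁, ‖w‖ ≤ R := by
    rintro w ⟨y, hy, rfl⟩
    calc ‖T₁ y‖ ≤ ‖(T₁ : Γ₁ →L[ℝ] Γ₁)‖ * ‖y‖ := (T₁ : Γ₁ →L[ℝ] Γ₁).le_opNorm y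
    _ ≤ R := by
        rw [hRdef]
        refine mul_le_mul_of_nonneg_left ?_ (ContinuousLinearMap.opNorm_nonneg _)
        exact hR₀ _ hy
  have h0K₁ : (0 : Γ₁) ∈ K₁ := by simpa [hK₁def] using h0B
  have hR0 : 0 ≤ R := le_trans (norm_nonneg _) (hR _ ⟨0, h0K₁, map_zero _⟩)
  -- positivity of the quadratic form coefficients
  have hAnn : 0 ≤ A := by rw [hAdef]; exact sq_nonneg _
  have hGnn : 0 ≤ G := by rw [hGdef]; exact sq_nonneg _
  have hA : 0 < A := by
    rcases hAnn.lt_or_eq with h | h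
    · exact h
    · exfalso
      have hmem := (key2 (R + 1) 0).2 (by rw [← h]; simpa using sq_nonneg r)
      rw [zero_smul, add_zero] at hmem
      have hRle := hR _ hmem
      have hb1 : ‖(R + 1) • v₁‖ = ‖(R + 1 : ℝ)‖ * ‖v₁‖ := norm_smul _ _
      have hb2 : ‖(R + 1 : ℝ)‖ = R + 1 := by
        rw [Real.norm_eq_abs]
        exact abs_of_pos (by linarith)
      rw [hb1, hb2, hv₁, mul_one] at hRle
      linarith
  have hG : 0 < G := by
    rcases hGnn.lt_or_eq with h | h
    · exact h
    · exfalso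
      have hmem := (key2 0 (R + 1)).2 (by rw [← h]; simpa using sq_nonneg r)
      rw [zero_smul, zero_add] at hmem
      have hRle := hR _ hmem
      have hb1 : ‖(R + 1) • u‖ = ‖(R + 1 : ℝ)‖ * ‖u‖ := norm_smul _ _
      have hb2 : ‖(R + 1 : ℝ)‖ = R + 1 := by
        rw [Real.norm_eq_abs]
        exact abs_of_pos (by linarith)
      rw [hb1, hb2, hu, mul_one] at hRle
      linarith
  -- positivity of `r`
  set N : ℝ := ‖(T₁.symm : Γ₁ →L[ℝ] Γ₁)‖ with hNdef
  have hN : 0 ≤ N := ContinuousLinearMap.opNorm_nonneg _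
  set ε : ℝ := δ / (2 * (N + 1)) with hεdef
  have hε : 0 < ε := by rw [hεdef]; positivity
  have hεv : ε • v₁ ∈ T₁ '' K₁ := by
    refine ⟨T₁.symm (ε • v₁), ?_, T₁.apply_symm_apply _⟩
    show ((T₁.symm (ε • v₁) : Γ₁) : EuclideanSpace ℝ (Fin (n + 1))) ∈ B
    apply hδB
    rw [Metric.mem_ball, dist_zero_right]
    have h1 : ‖((T₁.symm (ε • v₁) : Γ₁) : EuclideanSpace ℝ (Fin (n + 1)))‖ =
        ‖T₁.symm (ε • v₁)‖ := rfl
    rw [h1]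
    calc ‖T₁.symm (ε • v₁)‖ ≤ N * ‖ε • v₁‖ := (T₁.symm : Γ₁ →L[ℝ] Γ₁).le_opNorm _
    _ = N * ε := by
        rw [norm_smul, hv₁, Real.norm_eq_abs, abs_of_pos hε, mul_one]
    _ < δ := by
        have h2 : (0:ℝ) < 2 * (N + 1) := by positivity
        rw [hεdef, ← mul_div_assoc, div_lt_iff₀ h2]
        nlinarith [hδ, hN]
  have hrpos : 0 < r := by
    have h := (key2 ε 0).1 (by rw [zero_smul, add_zero]; exact hεv)
    have hq : 0 < A * ε ^ 2 := by positivity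
    nlinarith [hq, h, hr0]
  -- the cross term vanishes
  have hd1 : A + 2 * C + G = ‖g₁ + g₂‖ ^ 2 := by
    rw [norm_add_sq_real, hAdef, hCdef, hGdef]
  have hd2 : A - 2 * C + G = ‖g₁ - g₂‖ ^ 2 := by
    rw [norm_sub_sq_real, hAdef, hCdef, hGdef]
  have hC : C = 0 := by
    have heq := diag_eq (d₁ := A + 2 * C + G) (d₂ := A - 2 * C + G)
      (by rw [hd1]; exact sq_nonneg _) (by rw [hd2]; exact sq_nonneg _) hrpos ?_
    · linarith
    · intro t
      have h1 := hmemsym t t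
      have e1 : A * t ^ 2 + 2 * C * (t * t) + G * t ^ 2 = (A + 2 * C + G) * t ^ 2 := by ring
      have e2 : A * t ^ 2 + 2 * C * (t * (-t)) + G * (-t) ^ 2 = (A - 2 * C + G) * t ^ 2 := by
        ring
      rw [e1, e2] at h1
      exact h1
  -- conclude via the ellipsoid lemma
  have hmem' : ∀ t s : ℝ, (t • v₁ + s • u ∈ T₁ '' K₁) ↔ A * t ^ 2 + G * s ^ 2 ≤ r ^ 2 := by
    intro t s
    rw [key2 t s, hC]
    constructor <;> intro h <;> nlinarith [h]
  obtain ⟨S, hS⟩ := ellipsoid_of_rev hrev₁ hu huv hA hG hrpos hmem'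
  refine ⟨S.trans T₁.symm, 0, ?_⟩
  have hK : K₁ = T₁.symm '' (T₁ '' K₁) := (ContinuousLinearEquiv.symm_image_image T₁ K₁).symm
  rw [hK, hS, ← Set.image_comp]
  ext w
  simp [Function.comp, ContinuousLinearEquiv.trans_apply]
end

section
/- Let B ⊆ ℝ^{n+1} be a symmetric convex body. If x_i → x in Sⁿ, then the hyperplane sections x_i^⊥ ∩ B converge to x^⊥ ∩ B in the Hausdorff metric. -/
open Metric Filter

lemma section_approx {E : Type*} [NormedAddCommGroup E] [InnerProductSpace ℝ E]
    {B : Set E} (hconv : Convex ℝ B)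
    {r R : ℝ} (hr : 0 < r) (hball : Metric.closedBall (0 : E) r ⊆ B)
    (hR : ∀ y ∈ B, ‖y‖ ≤ R)
    {u v : E} (hv : ‖v‖ = 1) (hd : ‖u - v‖ ≤ r / R) :
    ∀ y ∈ B ∩ {y | (inner ℝ u y : ℝ) = 0},
      ∃ z ∈ B ∩ {y | (inner ℝ v y : ℝ) = 0}, dist y z ≤ R * (R + r) / r * ‖u - v‖ := by
  have hRpos : 0 < R := lt_of_lt_of_le hr (by
    have : (r • v) ∈ B := hball (by simp [norm_smul, abs_of_pos hr, hv, le_refl])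
    have := hR _ this
    rwa [norm_smul, hv, mul_one, Real.norm_eq_abs, abs_of_pos hr] at this)
  rintro y ⟨hyB, hyu⟩
  simp only [Set.mem_setOf_eq] at hyu
  by_cases h0 : u = v
  · refine ⟨y, ⟨hyB, by simpa [h0] using hyu⟩, ?_⟩
    simp only [dist_self]
    positivity
  · set δ := ‖u - v‖ with hδ
    have hδpos : 0 < δ := by
      rw [hδ, norm_pos_iff, sub_ne_zero]; exact h0
    set ε := δ * R / r with hε
    have hεpos : 0 < ε := by positivity
    have hε1 : ε ≤ 1 := by
      rw [hε, div_le_one hr]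
      calc δ * R ≤ (r / R) * R := by nlinarith
        _ = r := by field_simp
    have hyR : ‖y‖ ≤ R := hR _ hyB
    have hvy : |(inner ℝ v y : ℝ)| ≤ δ * R := by
      have : (inner ℝ v y : ℝ) = -(inner ℝ (u - v) y : ℝ) := by
        rw [inner_sub_left]; simp [hyu]
      rw [this, abs_neg]
      calc |(inner ℝ (u - v) y : ℝ)| ≤ ‖u - v‖ * ‖y‖ := abs_real_inner_le_norm _ _
        _ ≤ δ * R := by apply mul_le_mul le_rfl hyR (norm_nonneg _); positivity
    set p : E := (-((1 - ε) * (inner ℝ v y : ℝ) / ε)) • v with hp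
    have hpnorm : ‖p‖ ≤ r := by
      rw [hp, norm_smul, hv, mul_one, Real.norm_eq_abs, abs_neg, abs_div,
        abs_of_pos hεpos, div_le_iff₀ hεpos, abs_mul, abs_of_nonneg (by linarith : (0:ℝ) ≤ 1 - ε)]
      have : ε * r = δ * R := by rw [hε]; field_simp
      nlinarith [abs_nonneg ((inner ℝ v y : ℝ))]
    have hpB : p ∈ B := hball (by simpa [mem_closedBall, dist_zero_right] using hpnorm)
    refine ⟨(1 - ε) • y + ε • p, ⟨hconv hyB hpB (by linarith) (le_of_lt hεpos) (by ring), ?_⟩, ?_⟩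
    · show (inner ℝ v ((1 - ε) • y + ε • p) : ℝ) = 0
      rw [inner_add_right, inner_smul_right, inner_smul_right, hp, inner_smul_right,
        real_inner_self_eq_norm_sq, hv]
      field_simp
      ring
    · have : y - ((1 - ε) • y + ε • p) = ε • (y - p) := by
        rw [smul_sub, sub_smul, one_smul]; abel
      rw [dist_eq_norm, this, norm_smul, Real.norm_eq_abs, abs_of_pos hεpos]
      calc ε * ‖y - p‖ ≤ ε * (‖y‖ + ‖p‖) := by
            apply mul_le_mul_of_nonneg_left (norm_sub_le _ _) (le_of_lt hεpos)
        _ ≤ ε * (R + r) := by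
            apply mul_le_mul_of_nonneg_left (add_le_add hyR hpnorm) (le_of_lt hεpos)
        _ = R * (R + r) / r * δ := by rw [hε]; field_simp

/-- Hyperplane sections of a symmetric convex body depend continuously (in the Hausdorff
metric) on the unit normal vector: if x_i → x in Sⁿ then x_i^⊥ ∩ B → x^⊥ ∩ B. -/
theorem hyperplane_sections_hausdorff_continuous
    {n : ℕ}
    (B : Set (EuclideanSpace ℝ (Fin (n + 1)))) (hB : IsSymmConvexBody B)
    (x : ℕ → EuclideanSpace ℝ (Fin (n + 1))) (hx : ∀ i, ‖x i‖ = 1)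
    (xlim : EuclideanSpace ℝ (Fin (n + 1))) (hxlim : ‖xlim‖ = 1)
    (hconv : Filter.Tendsto x Filter.atTop (nhds xlim)) :
    Filter.Tendsto
      (fun i => Metric.hausdorffDist
        (B ∩ {y | (inner ℝ (x i) y : ℝ) = 0})
        (B ∩ {y | (inner ℝ xlim y : ℝ) = 0}))
      Filter.atTop (nhds 0) := by
  obtain ⟨hcomp, hcv, ⟨w, hw⟩, hsym⟩ := hB
  -- 0 ∈ interior B
  have hBneg : -B = B := by
    ext z
    simp only [Set.mem_neg]
    exact ⟨fun h => by simpa using hsym _ h, fun h => hsym _ h⟩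
  have hw' : -w ∈ B := hsym _ (interior_subset hw)
  have h0 : (0 : EuclideanSpace ℝ (Fin (n + 1))) ∈ interior B := by
    have := hcv.combo_interior_self_mem_interior hw hw'
      (by norm_num : (0:ℝ) < 1/2) (by norm_num : (0:ℝ) ≤ 1/2) (by norm_num)
    simpa [smul_neg] using this
  obtain ⟨r, hr, hball⟩ : ∃ r > 0, Metric.closedBall (0 : EuclideanSpace ℝ (Fin (n + 1))) r ⊆ B := by
    rw [mem_interior_iff_mem_nhds] at h0
    exact (Metric.nhds_basis_closedBall.mem_iff.mp h0).imp fun r h => ⟨h.1, h.2⟩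
  obtain ⟨R, hRb⟩ := hcomp.isBounded.subset_closedBall 0
  have hR : ∀ y ∈ B, ‖y‖ ≤ R := fun y hy => by
    simpa [mem_closedBall, dist_zero_right] using hRb hy
  have hRpos : 0 < R := lt_of_lt_of_le hr (by
    have : (r • xlim) ∈ B := hball (by simp [norm_smul, abs_of_pos hr, hxlim, le_refl])
    have := hR _ this
    rwa [norm_smul, hxlim, mul_one, Real.norm_eq_abs, abs_of_pos hr] at this)
  set C := R * (R + r) / r with hC
  have hCpos : 0 ≤ C := by positivity
  -- norm convergence
  have hnorm : Tendsto (fun i => ‖x i - xlim‖) atTop (nhds 0) :=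
    tendsto_iff_norm_sub_tendsto_zero.mp hconv
  have hev : ∀ᶠ i in atTop, ‖x i - xlim‖ ≤ r / R :=
    hnorm.eventually (eventually_le_nhds (by positivity : (0:ℝ) < r / R))
  refine squeeze_zero' (Eventually.of_forall fun i => Metric.hausdorffDist_nonneg)
    (hev.mono fun i hi => ?_) (by simpa using hnorm.const_mul C)
  refine Metric.hausdorffDist_le_of_mem_dist (by positivity) ?_ ?_
  · exact fun y hy => section_approx hcv hr hball hR hxlim hi y hy
  · intro y hy
    obtain ⟨z, hz, hdz⟩ := section_approx hcv hr hball hR (hx i)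
      (by rwa [norm_sub_rev]) y hy
    exact ⟨z, hz, by rwa [norm_sub_rev xlim] at hdz⟩
end
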